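/- arXiv:2503.13628 — 4 statements merged into one kernel-verified Lean document; each statement's English description precedes it below -/
import Mathlib

section
/- There is an absolute constant c > 0 with the following property. Let B, M, t be positive integers with K = 2^t and M ≤ K·B/2. Fix a function v : Fin M → Option (Fin K), and let (r_i)_{i ∈ Fin M} be mutually independent random variables, each uniformly distributed on Fin K. For k ∈ Fin K let X_k = #{ i : v_i = some w and w ⊕ r_i = k }. Then Pr[ ∃ k ∈ Fin K with X_k > 3B/4 ] ≤ K·exp(−c·B); equivalently, with probability at least 1 − K·exp(−c·B), every k ∈ Fin K satisfies X_k ≤ 3B/4. -/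
open MeasureTheory ProbabilityTheory

/-- Bitwise exclusive-or on `Fin (2^t)`, identifying elements with `t`-bit strings. -/
def finXor {t : ℕ} (a b : Fin (2 ^ t)) : Fin (2 ^ t) :=
  ⟨a.val ^^^ b.val, Nat.xor_lt_two_pow a.isLt b.isLt⟩

open scoped Classical

lemma finXor_eq_iff {t : ℕ} (a b k : Fin (2 ^ t)) : finXor a b = k ↔ b = finXor a k := by
  constructor <;> intro h <;> subst h <;>
    simp [finXor, Fin.ext_iff, ← Nat.xor_assoc]

open scoped Classical in
/-- Claim 3.3: with `K = 2^t` and `M ≤ K·B/2`, for any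
fixed `v : Fin M → Option (Fin K)` and independent uniform shifts `r_i` on `Fin K`, letting
`X_k = #{i : v_i = some w ∧ w ⊕ r_i = k}`, we have
`Pr[∃ k, X_k > 3B/4] ≤ K·exp(-c·B)` for an absolute constant `c > 0`. -/
theorem stmt_4 :
    ∃ c : ℝ, 0 < c ∧
      ∀ (B M t : ℕ), 0 < B → 0 < M → 0 < t →
        (M : ℝ) ≤ ((2 ^ t : ℕ) : ℝ) * (B : ℝ) / 2 →
        ∀ v : Fin M → Option (Fin (2 ^ t)),
        ∀ (Ω : Type) (_ : MeasurableSpace Ω) (μ : Measure Ω),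
          IsProbabilityMeasure μ →
        ∀ r : Fin M → Ω → Fin (2 ^ t),
          (∀ i, Measurable (r i)) →
          (∀ i k, μ {ω | r i ω = k} = ((2 ^ t : ℕ) : ENNReal)⁻¹) →
          iIndepFun r μ →
          μ {ω | ∃ k : Fin (2 ^ t), 3 * (B : ℝ) / 4 <
              ((Finset.univ.filter fun i : Fin M =>
                  ∃ w, v i = some w ∧ finXor w (r i ω) = k).card : ℝ)} ≤
            ((2 ^ t : ℕ) : ENNReal) * ENNReal.ofReal (Real.exp (-c * (B : ℝ))) := by
  have hlog2 : (0.6931471803 : ℝ) < Real.log 2 := Real.log_two_gt_d9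
  refine ⟨3 / 4 * Real.log 2 - 1 / 2, by nlinarith, ?_⟩
  intro B M t hB hM ht hMK v Ω mΩ μ hμ r hrm hrunif hindep
  have hKpos : 0 < 2 ^ t := Nat.pow_pos (by norm_num)
  set s : ℝ := Real.log 2 with hs_def
  have hs : 0 ≤ s := Real.log_nonneg one_le_two
  have hes : Real.exp s = 2 := Real.exp_log two_pos
  set c : ℝ := 3 / 4 * Real.log 2 - 1 / 2 with hc_def
  -- indicator random variables
  set Y : Fin (2^t) → Fin M → Ω → ℝ := fun k i ω =>
    if ∃ w, v i = some w ∧ finXor w (r i ω) = k then 1 else 0 with hY_def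
  have hcard : ∀ (k : Fin (2^t)) (ω : Ω),
      ((Finset.univ.filter fun i : Fin M =>
          ∃ w, v i = some w ∧ finXor w (r i ω) = k).card : ℝ) = ∑ i, Y k i ω := by
    intro k ω
    rw [Finset.card_filter]
    push_cast
    rfl
  -- per-k tail bound
  have hkey : ∀ k : Fin (2^t),
      μ {ω | 3 * (B : ℝ) / 4 < ∑ i, Y k i ω} ≤ ENNReal.ofReal (Real.exp (-c * B)) := by
    intro k
    set A : Fin M → Set Ω := fun i => {ω | ∃ w, v i = some w ∧ finXor w (r i ω) = k} with hA_def
    have hAmeas : ∀ i, MeasurableSet (A i) := fun i =>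
      (hrm i) (show MeasurableSet {x : Fin (2^t) | ∃ w, v i = some w ∧ finXor w x = k} from trivial)
    have hYind : ∀ i, Y k i = (A i).indicator (fun _ => (1 : ℝ)) := by
      intro i
      ext ω
      by_cases h : ω ∈ A i
      · simp only [Set.indicator_of_mem h]
        exact if_pos h
      · simp only [Set.indicator_of_notMem h]
        exact if_neg h
    -- probability of each A i
    have hAle : ∀ i, (μ (A i)).toReal ≤ ((2^t : ℕ) : ℝ)⁻¹ := by
      intro i
      cases hv : v i with
      | none =>
          have : A i = ∅ := by
            ext ω; simp [hA_def, hv]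
          rw [this]
          simp [inv_nonneg, ]
      | some w =>
          have : A i = {ω | r i ω = finXor w k} := by
            ext ω
            simp [hA_def, hv, finXor_eq_iff]
          rw [this, hrunif i (finXor w k), ENNReal.toReal_inv]
          simp
    have hApos : ∀ i, 0 ≤ (μ (A i)).toReal := fun i => ENNReal.toReal_nonneg
    -- measurability and independence of the indicators
    have hYmeas : ∀ i, Measurable (Y k i) := by
      intro i
      have : Y k i = (fun x : Fin (2^t) => if ∃ w, v i = some w ∧ finXor w x = k then (1:ℝ) else 0)
          ∘ r i := rfl
      rw [this]
      exact (measurable_of_countable _).comp (hrm i)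
    have hYindep : iIndepFun (fun i => Y k i) μ := by
      have h := hindep.comp
        (fun i (x : Fin (2^t)) => if ∃ w, v i = some w ∧ finXor w x = k then (1:ℝ) else 0)
        (fun i => measurable_of_countable _)
      exact h
    -- integrability of exp(s * Y i)
    have hexpY : ∀ i, (fun ω => Real.exp (s * Y k i ω))
        = fun ω => 1 + (Real.exp s - 1) * Y k i ω := by
      intro i
      ext ω
      by_cases h : ω ∈ A i
      · have : Y k i ω = 1 := by rw [hYind i, Set.indicator_of_mem h]
        rw [this, mul_one]; ring_nf
      · have : Y k i ω = 0 := by rw [hYind i, Set.indicator_of_notMem h]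
        rw [this]; simp
    have hYint : ∀ i, Integrable (Y k i) μ := by
      intro i
      rw [hYind i]
      exact (integrable_const (1:ℝ)).indicator (hAmeas i)
    have hint : ∀ i, Integrable (fun ω => Real.exp (s * Y k i ω)) μ := by
      intro i
      rw [hexpY i]
      exact (integrable_const 1).add ((hYint i).const_mul _)
    -- mgf of each indicator
    have hmgf : ∀ i, mgf (Y k i) μ s = 1 + (Real.exp s - 1) * (μ (A i)).toReal := by
      intro i
      unfold mgf
      rw [hexpY i]
      rw [integral_add (integrable_const 1) ((hYint i).const_mul _)]
      rw [integral_const, integral_const_mul]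
      have : ∫ ω, Y k i ω ∂μ = (μ (A i)).toReal := by
        rw [hYind i]
        rw [integral_indicator_const (1:ℝ) (hAmeas i)]
        simp [Measure.real]
      rw [this]
      simp
    -- Chernoff bound
    have hchern := measure_ge_le_exp_mul_mgf (μ := μ) (X := ∑ i, Y k i)
      (3 * (B : ℝ) / 4) hs ?_
    swap
    · have := hYindep.integrable_exp_mul_sum (t := s) hYmeas
        (s := Finset.univ) (fun i _ => hint i)
      simpa using this
    -- bound the mgf of the sum
    have hmgfsum : mgf (∑ i, Y k i) μ s ≤ Real.exp ((B : ℝ) / 2) := by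
      rw [hYindep.mgf_sum hYmeas]
      have h1 : ∀ i ∈ Finset.univ, mgf (Y k i) μ s ≤ Real.exp (((2^t : ℕ) : ℝ)⁻¹) := by
        intro i _
        rw [hmgf i, hes]
        have : (1 : ℝ) + (2 - 1) * (μ (A i)).toReal ≤ 1 + ((2^t : ℕ) : ℝ)⁻¹ := by
          have := hAle i; nlinarith
        refine this.trans ?_
        have := Real.add_one_le_exp (((2^t : ℕ) : ℝ)⁻¹)
        linarith
      have h0 : ∀ i ∈ Finset.univ, (0:ℝ) ≤ mgf (Y (k) i) μ s := by
        intro i _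
        rw [hmgf i, hes]
        have := hApos i; nlinarith
      calc ∏ i, mgf (Y k i) μ s ≤ ∏ _i : Fin M, Real.exp (((2^t : ℕ) : ℝ)⁻¹) :=
            Finset.prod_le_prod h0 h1
        _ = Real.exp ((M : ℝ) * ((2^t : ℕ) : ℝ)⁻¹) := by
            rw [Finset.prod_const, ← Real.exp_nat_mul]
            simp
        _ ≤ Real.exp ((B : ℝ) / 2) := by
            apply Real.exp_le_exp.mpr
            rw [← div_eq_mul_inv, div_le_iff₀ (by positivity : (0:ℝ) < ((2^t : ℕ) : ℝ))]
            calc (M : ℝ) ≤ ((2^t : ℕ) : ℝ) * B / 2 := hMK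
              _ = (B : ℝ) / 2 * ((2^t : ℕ) : ℝ) := by ring
    -- combine
    have hKtop : μ {ω | 3 * (B : ℝ) / 4 < ∑ i, Y k i ω} ≠ ⊤ := measure_ne_top μ _
    rw [ENNReal.le_ofReal_iff_toReal_le hKtop (Real.exp_nonneg _)]
    have hmono : μ {ω | 3 * (B : ℝ) / 4 < ∑ i, Y k i ω}
        ≤ μ {ω | 3 * (B : ℝ) / 4 ≤ (∑ i, Y k i) ω} := by
      apply measure_mono
      intro ω hω
      simp only [Set.mem_setOf_eq, Finset.sum_apply] at hω ⊢
      exact hω.le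
    refine le_trans (ENNReal.toReal_mono (measure_ne_top μ _) hmono) (hchern.trans ?_)
    calc Real.exp (-s * (3 * (B:ℝ) / 4)) * mgf (∑ i, Y k i) μ s
        ≤ Real.exp (-s * (3 * (B:ℝ) / 4)) * Real.exp ((B:ℝ) / 2) := by
          exact mul_le_mul_of_nonneg_left hmgfsum (Real.exp_nonneg _)
      _ = Real.exp (-c * B) := by
          rw [← Real.exp_add]
          congr 1
          rw [hc_def, hs_def]
          ring
  -- union bound
  have hset : {ω | ∃ k : Fin (2^t), 3 * (B : ℝ) / 4 <
      ((Finset.univ.filter fun i : Fin M =>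
          ∃ w, v i = some w ∧ finXor w (r i ω) = k).card : ℝ)}
      = ⋃ k : Fin (2^t), {ω | 3 * (B : ℝ) / 4 < ∑ i, Y k i ω} := by
    ext ω
    simp only [Set.mem_setOf_eq, Set.mem_iUnion]
    constructor
    · rintro ⟨k, hk⟩; exact ⟨k, by rwa [hcard k ω] at hk⟩
    · rintro ⟨k, hk⟩; exact ⟨k, by rwa [hcard k ω]⟩
  rw [hset]
  calc μ (⋃ k : Fin (2^t), {ω | 3 * (B : ℝ) / 4 < ∑ i, Y k i ω})
      ≤ ∑' k : Fin (2^t), μ {ω | 3 * (B : ℝ) / 4 < ∑ i, Y k i ω} := measure_iUnion_le _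
    _ = ∑ k : Fin (2^t), μ {ω | 3 * (B : ℝ) / 4 < ∑ i, Y k i ω} := tsum_fintype _
    _ ≤ ∑ _k : Fin (2^t), ENNReal.ofReal (Real.exp (-c * B)) :=
        Finset.sum_le_sum (fun k _ => hkey k)
    _ = ((2 ^ t : ℕ) : ENNReal) * ENNReal.ofReal (Real.exp (-c * B)) := by
        rw [Finset.sum_const, Finset.card_univ, Fintype.card_fin, nsmul_eq_mul]
end

section
/- For every δ ∈ (0, 0.1) and every sufficiently large integer c (how large depending only on δ), there exists N₀ (depending on δ and c) such that the following holds for all n ≥ N₀. Let B, M, t be positive integers with K = 2^t, K ≤ n, n^δ/2 ≤ B ≤ 2·n^δ, and M ≤ K·B/2. Fix a function v : Fin M → Option (Fin K), and let (r_i)_{i ∈ Fin M} be a c-wise independent family of random variables, each uniformly distributed on Fin K. For k ∈ Fin K let X_k = #{ i : v_i = some w and w ⊕ r_i = k }. Then Pr[ ∃ k ∈ Fin K with X_k > 3B/4 ] ≤ n^{1 − δc/3}. -/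
open MeasureTheory ProbabilityTheory

/-- A family `(X_i)_{i ∈ ι}` of random variables is `c`-wise independent if for every
subset `S ⊆ ι` with `|S| ≤ c`, the subfamily `(X_i)_{i ∈ S}` is mutually independent. -/
def CWiseIndep {Ω : Type*} {ι : Type*} {β : Type*} [MeasurableSpace Ω] [MeasurableSpace β]
    (c : ℕ) (X : ι → Ω → β) (μ : Measure Ω) : Prop :=
  ∀ S : Finset ι, S.card ≤ c →
    iIndepFun (fun i : S => X i.val) μ

open scoped Classical

section Aux
variable {Ω : Type} [MeasurableSpace Ω] {μ : Measure Ω} {M K : ℕ}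
  {r : Fin M → Ω → Fin K}

/-- atom decomposition -/
lemma atoms (hr : ∀ i, Measurable (r i)) (P : (Fin M → Fin K) → Prop)
    [DecidablePred P] :
    μ {ω | P (fun i => r i ω)} =
      ∑ x ∈ Finset.univ.filter P, μ (⋂ i, r i ⁻¹' {x i}) := by
  have hmeas : ∀ x : Fin M → Fin K, MeasurableSet (⋂ i, r i ⁻¹' {x i}) :=
    fun x => MeasurableSet.iInter fun i => (hr i) (measurableSet_singleton _)
  have hmem : ∀ (ω : Ω) (x : Fin M → Fin K),
      ω ∈ ⋂ i, r i ⁻¹' {x i} ↔ (fun i => r i ω) = x := by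
    intro ω x
    simp [Set.mem_iInter, funext_iff]
  have hset : {ω | P (fun i => r i ω)} =
      ⋃ x ∈ Finset.univ.filter P, ⋂ i, r i ⁻¹' {x i} := by
    ext ω
    simp only [Set.mem_setOf_eq, Set.mem_iUnion, Finset.mem_filter, Finset.mem_univ, true_and]
    constructor
    · intro h
      exact ⟨fun i => r i ω, h, (hmem ω _).2 rfl⟩
    · rintro ⟨x, hx, hω⟩
      rw [(hmem ω x).1 hω]; exact hx
  rw [hset, measure_biUnion_finset _ (fun x _ => hmeas x)]
  intro x hx y hy hxy
  refine Set.disjoint_left.2 fun ω h1 h2 => hxy ?_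
  rw [← (hmem ω x).1 h1, (hmem ω y).1 h2]

/-- c-wise independence gives product formula for atoms pinned on `S` -/
lemma pinned (hu : ∀ i k, μ {ω | r i ω = k} = (K : ENNReal)⁻¹)
    (hind : CWiseIndep c r μ) (S : Finset (Fin M)) (hS : S.card ≤ c)
    (a : Fin M → Fin K) :
    μ (⋂ i ∈ S, r i ⁻¹' {a i}) = (K : ENNReal)⁻¹ ^ S.card := by
  have h := (hind S hS).measure_inter_preimage_eq_mul Finset.univ
    (sets := fun i : S => ({a i.val} : Set (Fin K)))
    (fun i _ => measurableSet_singleton _)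
  have h1 : (⋂ (i : S) (_ : i ∈ Finset.univ), r i.val ⁻¹' {a i.val}) =
      ⋂ i ∈ S, r i ⁻¹' {a i} := by
    simp only [Set.iInter_true, Finset.mem_univ]
    rw [Set.iInter_subtype (fun i => i ∈ S) (fun i => r i.1 ⁻¹' {a i.1})]
  have h2 : ∀ i : Fin M, r i ⁻¹' {a i} = {ω | r i ω = a i} := by
    intro i; ext ω; simp [Set.mem_preimage]
  rw [h1] at h
  rw [h]
  rw [Finset.prod_coe_sort S (fun i => μ (r i ⁻¹' {a i}))]
  rw [Finset.prod_congr rfl fun i _ => by rw [h2 i, hu i (a i)]]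
  simp

end Aux

section Aux2
variable {Ω : Type} [MeasurableSpace Ω] {μ : Measure Ω} [IsProbabilityMeasure μ]
  {M K : ℕ} {c : ℕ} {r : Fin M → Ω → Fin K}

noncomputable def atomW (r : Fin M → Ω → Fin K) (μ : Measure Ω) :
    (Fin M → Fin K) → ℝ :=
  fun x => (μ (⋂ i, r i ⁻¹' {x i})).toReal

lemma atomW_nonneg (x : Fin M → Fin K) : 0 ≤ atomW r μ x := ENNReal.toReal_nonneg

lemma measure_eq_ofReal_sum (hr : ∀ i, Measurable (r i))
    (P : (Fin M → Fin K) → Prop) [DecidablePred P] :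
    μ {ω | P (fun i => r i ω)} =
      ENNReal.ofReal (∑ x ∈ Finset.univ.filter P, atomW r μ x) := by
  rw [atoms hr P, ENNReal.ofReal_sum_of_nonneg (fun x _ => atomW_nonneg x)]
  exact Finset.sum_congr rfl fun x _ => (ENNReal.ofReal_toReal (measure_ne_top μ _)).symm

lemma pinned_real (hK : 0 < K) (hr : ∀ i, Measurable (r i))
    (hu : ∀ i k, μ {ω | r i ω = k} = (K : ENNReal)⁻¹)
    (hind : CWiseIndep c r μ) (S : Finset (Fin M)) (hS : S.card ≤ c)
    (a : Fin M → Fin K) :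
    ∑ x ∈ Finset.univ.filter (fun x : Fin M → Fin K => ∀ i ∈ S, x i = a i),
      atomW r μ x = ((K : ℝ)⁻¹) ^ S.card := by
  have h1 := atoms (μ := μ) hr (fun x => ∀ i ∈ S, x i = a i)
  have h2 : {ω | ∀ i ∈ S, r i ω = a i} = ⋂ i ∈ S, r i ⁻¹' {a i} := by
    ext ω; simp [Set.mem_iInter]
  have h3 := pinned hu hind S hS a
  rw [← h2, h1] at h3
  have h4 : (∑ x ∈ Finset.univ.filter (fun x : Fin M → Fin K => ∀ i ∈ S, x i = a i),
      μ (⋂ i, r i ⁻¹' {x i})).toReal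
      = ∑ x ∈ Finset.univ.filter (fun x : Fin M → Fin K => ∀ i ∈ S, x i = a i),
        atomW r μ x :=
    ENNReal.toReal_sum fun x _ => measure_ne_top μ _
  rw [← h4, h3]
  rw [ENNReal.toReal_pow]
  congr 1
  rw [ENNReal.toReal_inv]
  simp

/-- product expectation formula under `c`-wise independence -/
lemma prod_exp (hK : 0 < K) (hr : ∀ i, Measurable (r i))
    (hu : ∀ i k, μ {ω | r i ω = k} = (K : ENNReal)⁻¹)
    (hind : CWiseIndep c r μ) (S : Finset (Fin M)) (hS : S.card ≤ c)
    (h : Fin M → Fin K → ℝ) :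
    ∑ x : Fin M → Fin K, atomW r μ x * ∏ i ∈ S, h i (x i)
      = ∏ i ∈ S, ((K : ℝ)⁻¹ * ∑ a : Fin K, h i a) := by
  have : NeZero K := ⟨hK.ne'⟩
  -- expand each factor as a collapsing sum
  have step1 : ∀ x : Fin M → Fin K, ∏ i ∈ S, h i (x i) =
      ∑ p ∈ S.pi (fun _ => (Finset.univ : Finset (Fin K))), ∏ j ∈ S.attach,
        (if x j.1 = p j.1 j.2 then h j.1 (p j.1 j.2) else 0) := by
    intro x
    rw [← Finset.prod_sum S (fun _ => Finset.univ)
      (fun i a => if x i = a then h i a else 0)]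
    exact Finset.prod_congr rfl fun i _ => by
      rw [Finset.sum_ite_eq Finset.univ (x i) (h i)]; simp
  calc ∑ x : Fin M → Fin K, atomW r μ x * ∏ i ∈ S, h i (x i)
      = ∑ p ∈ S.pi (fun _ => (Finset.univ : Finset (Fin K))), ∑ x : Fin M → Fin K,
          atomW r μ x * ∏ j ∈ S.attach,
            (if x j.1 = p j.1 j.2 then h j.1 (p j.1 j.2) else 0) := by
        rw [Finset.sum_congr rfl (fun x (_ : x ∈ Finset.univ) => by
          rw [step1 x, Finset.mul_sum] :
          ∀ x ∈ Finset.univ, atomW r μ x * ∏ i ∈ S, h i (x i) = _)]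
        exact Finset.sum_comm
    _ = ∑ p ∈ S.pi (fun _ => (Finset.univ : Finset (Fin K))),
          (∏ j ∈ S.attach, h j.1 (p j.1 j.2)) * ((K : ℝ)⁻¹) ^ S.card := by
        refine Finset.sum_congr rfl fun p hp => ?_
        have key : ∀ x : Fin M → Fin K,
            (∏ j ∈ S.attach, (if x j.1 = p j.1 j.2 then h j.1 (p j.1 j.2) else 0))
            = if (∀ i (hi : i ∈ S), x i = p i hi)
              then ∏ j ∈ S.attach, h j.1 (p j.1 j.2) else 0 := by
          intro x
          by_cases hc : ∀ i (hi : i ∈ S), x i = p i hi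
          · rw [if_pos hc]
            exact Finset.prod_congr rfl fun j _ => by rw [if_pos (hc j.1 j.2)]
          · rw [if_neg hc]
            push_neg at hc
            obtain ⟨i, hi, hne⟩ := hc
            exact Finset.prod_eq_zero (Finset.mem_attach S ⟨i, hi⟩) (by simp [hne])
        have hsum : ∑ x : Fin M → Fin K, atomW r μ x *
            (if (∀ i (hi : i ∈ S), x i = p i hi)
              then ∏ j ∈ S.attach, h j.1 (p j.1 j.2) else 0)
            = (∏ j ∈ S.attach, h j.1 (p j.1 j.2)) * ((K : ℝ)⁻¹) ^ S.card := by
          rw [Finset.sum_congr rfl (fun x _ => by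
            rw [mul_ite, mul_zero, mul_comm])]
          rw [← Finset.sum_filter]
          rw [← Finset.mul_sum]
          congr 1
          have := pinned_real (μ := μ) hK hr hu hind S hS
            (fun i => if hi : i ∈ S then p i hi else Classical.arbitrary _)
          rw [← this]
          apply Finset.sum_congr _ (fun _ _ => rfl)
          apply Finset.filter_congr
          intro x _
          constructor
          · intro hx i hi; rw [hx i hi]; simp [hi]
          · intro hx i hi; rw [hx i hi]; simp [hi]
        rw [← hsum]
        exact Finset.sum_congr rfl fun x _ => by rw [key x]
    _ = ∏ i ∈ S, ((K : ℝ)⁻¹ * ∑ a : Fin K, h i a) := by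
        rw [Finset.prod_congr rfl (fun i (_ : i ∈ S) => (Finset.mul_sum _ _ _ :
          (K : ℝ)⁻¹ * ∑ a : Fin K, h i a = ∑ a : Fin K, (K : ℝ)⁻¹ * h i a))]
        rw [Finset.prod_sum S (fun _ => Finset.univ) (fun i a => (K : ℝ)⁻¹ * h i a)]
        refine Finset.sum_congr rfl fun p hp => ?_
        rw [Finset.prod_mul_distrib, Finset.prod_const, Finset.card_attach, mul_comm]

end Aux2

section Aux3
variable {Ω : Type} [MeasurableSpace Ω] {μ : Measure Ω} [IsProbabilityMeasure μ]
  {M K c : ℕ} {r : Fin M → Ω → Fin K}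

/-- centered indicator -/
noncomputable def yfun (K : ℕ) {M : ℕ} (b : Fin M → Fin K) : Fin M → Fin K → ℝ :=
  fun i a => (if a = b i then (1:ℝ) else 0) - (K:ℝ)⁻¹

lemma yfun_sum (hK : 0 < K) (b : Fin M → Fin K) (i : Fin M) :
    ∑ a : Fin K, yfun K b i a = 0 := by
  unfold yfun
  rw [Finset.sum_sub_distrib, Finset.sum_ite_eq' Finset.univ (b i) (fun _ => (1:ℝ))]
  simp [Finset.card_univ, mul_inv_cancel₀ (show (K:ℝ) ≠ 0 by positivity)]

lemma yfun_abs_le (hK : 0 < K) (b : Fin M → Fin K) (i : Fin M) (a : Fin K) :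
    |yfun K b i a| ≤ 1 := by
  have h1 : (0:ℝ) < (K:ℝ)⁻¹ := by positivity
  have h2 : (K:ℝ)⁻¹ ≤ 1 := by
    rw [inv_le_one_iff₀]; right; exact_mod_cast Nat.one_le_cast.2 hK
  unfold yfun
  by_cases hc : a = b i
  · rw [if_pos hc, abs_le]; constructor <;> linarith
  · rw [if_neg hc, abs_le]; constructor <;> linarith

lemma yfun_sq_sum (hK : 0 < K) (b : Fin M → Fin K) (i : Fin M) :
    ∑ a : Fin K, (yfun K b i a) ^ 2 ≤ 1 := by
  have h1 : (0:ℝ) < (K:ℝ)⁻¹ := by positivity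
  have hKne : (K:ℝ) ≠ 0 := by positivity
  unfold yfun
  have : ∀ a : Fin K, ((if a = b i then (1:ℝ) else 0) - (K:ℝ)⁻¹) ^ 2
      = (if a = b i then (1:ℝ) else 0) - 2 * (K:ℝ)⁻¹ * (if a = b i then (1:ℝ) else 0)
        + (K:ℝ)⁻¹ ^ 2 := by
    intro a; by_cases hc : a = b i <;> simp [hc] <;> ring
  rw [Finset.sum_congr rfl fun a _ => this a]
  rw [Finset.sum_add_distrib, Finset.sum_sub_distrib, ← Finset.mul_sum,
    Finset.sum_ite_eq' Finset.univ (b i) (fun _ => (1:ℝ))]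
  simp only [Finset.mem_univ, if_true, Finset.sum_const, Finset.card_univ,
    Fintype.card_fin, nsmul_eq_mul]
  have : (K:ℝ) * (K:ℝ)⁻¹ ^ 2 = (K:ℝ)⁻¹ := by
    field_simp
  rw [this]
  nlinarith [h1]

lemma yfun_moment (hK : 0 < K) (b : Fin M → Fin K) (i : Fin M) {m : ℕ} (hm : 2 ≤ m) :
    |(K:ℝ)⁻¹ * ∑ a : Fin K, (yfun K b i a) ^ m| ≤ (K:ℝ)⁻¹ := by
  have h1 : (0:ℝ) ≤ (K:ℝ)⁻¹ := by positivity
  rw [abs_mul, abs_of_nonneg h1]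
  have : |∑ a : Fin K, (yfun K b i a) ^ m| ≤ 1 := by
    refine le_trans (Finset.abs_sum_le_sum_abs _ _) ?_
    refine le_trans (Finset.sum_le_sum (fun a _ => ?_)) (yfun_sq_sum hK b i)
    rw [abs_pow]
    calc |yfun K b i a| ^ m ≤ |yfun K b i a| ^ 2 :=
          pow_le_pow_of_le_one (abs_nonneg _) (yfun_abs_le hK b i a) hm
      _ = (yfun K b i a) ^ 2 := sq_abs _
  calc (K:ℝ)⁻¹ * |∑ a : Fin K, (yfun K b i a) ^ m| ≤ (K:ℝ)⁻¹ * 1 :=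
        mul_le_mul_of_nonneg_left this h1
    _ = (K:ℝ)⁻¹ := mul_one _

end Aux3

section Aux4
variable {Ω : Type} [MeasurableSpace Ω] {μ : Measure Ω} [IsProbabilityMeasure μ]
  {M K c : ℕ} {r : Fin M → Ω → Fin K}

set_option maxHeartbeats 1600000 in
lemma moment_bound (hK : 0 < K) (hr : ∀ i, Measurable (r i))
    (hu : ∀ i k, μ {ω | r i ω = k} = (K : ENNReal)⁻¹)
    (hind : CWiseIndep c r μ)
    (T : Finset (Fin M)) (b : Fin M → Fin K) (q : ℕ) (hq2 : 2 ≤ q) (hqc : q ≤ c) :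
    ∑ x : Fin M → Fin K, atomW r μ x * (∑ i ∈ T, yfun K b i (x i)) ^ q
      ≤ ∑ s ∈ Finset.Icc 1 (q / 2),
          (T.card.choose s : ℝ) * (s:ℝ) ^ q * ((K:ℝ)⁻¹) ^ s := by
  -- Step 1: expand the power
  have step1 : ∀ x : Fin M → Fin K, (∑ i ∈ T, yfun K b i (x i)) ^ q
      = ∑ g ∈ Fintype.piFinset (fun _ : Fin q => T),
          ∏ j : Fin q, yfun K b (g j) (x (g j)) := by
    intro x
    have hpc : (∑ i ∈ T, yfun K b i (x i)) ^ q
        = ∏ _j : Fin q, (∑ i ∈ T, yfun K b i (x i)) := by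
      rw [Finset.prod_const, Finset.card_univ, Fintype.card_fin]
    rw [hpc, Finset.prod_univ_sum (fun _ => T) (fun _ i => yfun K b i (x i))]
  -- Step 2+3: per-g expectation
  have hEg : ∀ g : Fin q → Fin M,
      (∑ x : Fin M → Fin K, atomW r μ x * ∏ j : Fin q, yfun K b (g j) (x (g j)))
      = ∏ i ∈ Finset.univ.image g, ((K:ℝ)⁻¹ * ∑ a : Fin K,
          (yfun K b i a) ^ (Finset.univ.filter fun j => g j = i).card) := by
    intro g
    have h1 : ∀ x : Fin M → Fin K, ∏ j : Fin q, yfun K b (g j) (x (g j))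
        = ∏ i ∈ Finset.univ.image g,
            (yfun K b i (x i)) ^ (Finset.univ.filter fun j => g j = i).card := fun x =>
      Finset.prod_comp (fun i => yfun K b i (x i)) g
    have h2 : (∑ x : Fin M → Fin K, atomW r μ x * ∏ j : Fin q, yfun K b (g j) (x (g j)))
        = (∑ x : Fin M → Fin K, atomW r μ x * ∏ i ∈ Finset.univ.image g,
            (yfun K b i (x i)) ^ (Finset.univ.filter fun j => g j = i).card) :=
      Finset.sum_congr rfl (fun x _ => by rw [h1 x])
    rw [h2]
    exact prod_exp hK hr hu hind (Finset.univ.image g)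
      (le_trans (le_trans Finset.card_image_le (by simp)) hqc)
      (fun i a => yfun K b i a ^ (Finset.univ.filter fun j => g j = i).card)
  -- the total sum equals the sum of per-g expectations
  have step2 : ∑ x : Fin M → Fin K, atomW r μ x * (∑ i ∈ T, yfun K b i (x i)) ^ q
      = ∑ g ∈ Fintype.piFinset (fun _ : Fin q => T),
          ∏ i ∈ Finset.univ.image g, ((K:ℝ)⁻¹ * ∑ a : Fin K,
            (yfun K b i a) ^ (Finset.univ.filter fun j => g j = i).card) := by
    have e1 : ∑ x : Fin M → Fin K, atomW r μ x * (∑ i ∈ T, yfun K b i (x i)) ^ q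
        = ∑ x : Fin M → Fin K, ∑ g ∈ Fintype.piFinset (fun _ : Fin q => T),
            atomW r μ x * ∏ j : Fin q, yfun K b (g j) (x (g j)) :=
      Finset.sum_congr rfl (fun x _ => by rw [step1 x, Finset.mul_sum])
    rw [e1, Finset.sum_comm]
    exact Finset.sum_congr rfl fun g _ => hEg g
  rw [step2]
  -- lower bound on multiplicities on the image
  have hmg_pos : ∀ g : Fin q → Fin M, ∀ i ∈ Finset.univ.image g,
      1 ≤ (Finset.univ.filter fun j => g j = i).card := by
    intro g i hi
    obtain ⟨j, _, hj⟩ := Finset.mem_image.1 hi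
    exact Finset.card_pos.2 ⟨j, by simp [hj]⟩
  -- per-g bound
  have hgbound : ∀ g ∈ Fintype.piFinset (fun _ : Fin q => T),
      (∏ i ∈ Finset.univ.image g, ((K:ℝ)⁻¹ * ∑ a : Fin K,
        (yfun K b i a) ^ (Finset.univ.filter fun j => g j = i).card))
      ≤ (if (∀ i ∈ Finset.univ.image g, 2 ≤ (Finset.univ.filter fun j => g j = i).card)
          then ((K:ℝ)⁻¹) ^ (Finset.univ.image g).card else 0) := by
    intro g _
    by_cases hgood : ∀ i ∈ Finset.univ.image g,
        2 ≤ (Finset.univ.filter fun j => g j = i).card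
    · rw [if_pos hgood]
      calc ∏ i ∈ Finset.univ.image g, ((K:ℝ)⁻¹ * ∑ a : Fin K,
              (yfun K b i a) ^ (Finset.univ.filter fun j => g j = i).card)
          ≤ |∏ i ∈ Finset.univ.image g, ((K:ℝ)⁻¹ * ∑ a : Fin K,
              (yfun K b i a) ^ (Finset.univ.filter fun j => g j = i).card)| := le_abs_self _
        _ = ∏ i ∈ Finset.univ.image g, |(K:ℝ)⁻¹ * ∑ a : Fin K,
              (yfun K b i a) ^ (Finset.univ.filter fun j => g j = i).card| :=
            Finset.abs_prod _ _
        _ ≤ ∏ i ∈ Finset.univ.image g, (K:ℝ)⁻¹ := Finset.prod_le_prod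
            (fun i _ => abs_nonneg _) (fun i hi => yfun_moment hK b i (hgood i hi))
        _ = ((K:ℝ)⁻¹) ^ (Finset.univ.image g).card := Finset.prod_const _
    · rw [if_neg hgood]
      push_neg at hgood
      obtain ⟨i, hi, hlt⟩ := hgood
      have h1 : (Finset.univ.filter fun j => g j = i).card = 1 := by
        have := hmg_pos g i hi; omega
      refine le_of_eq (Finset.prod_eq_zero hi ?_)
      rw [h1, show ∑ a : Fin K, (yfun K b i a) ^ 1 = ∑ a : Fin K, yfun K b i a from by simp,
        yfun_sum hK b i, mul_zero]
  refine le_trans (Finset.sum_le_sum hgbound) ?_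
  rw [← Finset.sum_filter]
  have hmaps : ∀ g ∈ (Fintype.piFinset (fun _ : Fin q => T)).filter
      (fun g => ∀ i ∈ Finset.univ.image g, 2 ≤ (Finset.univ.filter fun j => g j = i).card),
      Finset.univ.image g ∈ T.powerset.filter (fun S => 1 ≤ S.card ∧ S.card ≤ q / 2) := by
    intro g hg
    rw [Finset.mem_filter] at hg
    obtain ⟨hgF, hgood⟩ := hg
    rw [Finset.mem_filter, Finset.mem_powerset]
    have himgT : Finset.univ.image g ⊆ T := by
      intro i hi
      obtain ⟨j, _, hj⟩ := Finset.mem_image.1 hi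
      rw [← hj]
      exact Fintype.mem_piFinset.1 hgF j
    have hne : (Finset.univ.image g).Nonempty :=
      ⟨g ⟨0, by omega⟩, Finset.mem_image_of_mem g (Finset.mem_univ _)⟩
    have hcard : q = ∑ i ∈ Finset.univ.image g,
        (Finset.univ.filter fun j => g j = i).card := by
      have := Finset.card_eq_sum_card_fiberwise
        (f := g) (s := (Finset.univ : Finset (Fin q))) (t := Finset.univ.image g)
        (fun j _ => Finset.mem_image_of_mem g (Finset.mem_univ _))
      simpa using this
    have h2 : 2 * (Finset.univ.image g).card ≤ q := by
      have h3 := Finset.sum_le_sum hgood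
      rw [Finset.sum_const, smul_eq_mul] at h3
      omega
    exact ⟨himgT, Finset.card_pos.2 hne, Nat.le_div_iff_mul_le (by omega) |>.2 (by omega)⟩
  rw [← Finset.sum_fiberwise_of_maps_to hmaps
    (fun g => ((K:ℝ)⁻¹) ^ (Finset.univ.image g).card)]
  -- bound inner fibers
  have hfiber : ∀ S ∈ T.powerset.filter (fun S => 1 ≤ S.card ∧ S.card ≤ q / 2),
      (∑ g ∈ ((Fintype.piFinset (fun _ : Fin q => T)).filter
        (fun g => ∀ i ∈ Finset.univ.image g,
          2 ≤ (Finset.univ.filter fun j => g j = i).card)).filter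
        (fun g => Finset.univ.image g = S), ((K:ℝ)⁻¹) ^ (Finset.univ.image g).card)
      ≤ ((S.card : ℝ)) ^ q * ((K:ℝ)⁻¹) ^ S.card := by
    intro S hS
    have h1 : ∀ g ∈ ((Fintype.piFinset (fun _ : Fin q => T)).filter
        (fun g => ∀ i ∈ Finset.univ.image g,
          2 ≤ (Finset.univ.filter fun j => g j = i).card)).filter
        (fun g => Finset.univ.image g = S),
        ((K:ℝ)⁻¹) ^ (Finset.univ.image g).card = ((K:ℝ)⁻¹) ^ S.card := by
      intro g hg
      rw [(Finset.mem_filter.1 hg).2]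
    rw [Finset.sum_congr rfl h1, Finset.sum_const, nsmul_eq_mul]
    refine mul_le_mul_of_nonneg_right ?_ (by positivity)
    have hsub : ((Fintype.piFinset (fun _ : Fin q => T)).filter
        (fun g => ∀ i ∈ Finset.univ.image g,
          2 ≤ (Finset.univ.filter fun j => g j = i).card)).filter
        (fun g => Finset.univ.image g = S) ⊆ Fintype.piFinset (fun _ : Fin q => S) := by
      intro g hg
      rw [Fintype.mem_piFinset]
      intro j
      rw [← (Finset.mem_filter.1 hg).2]
      exact Finset.mem_image_of_mem g (Finset.mem_univ _)
    calc ((((Fintype.piFinset (fun _ : Fin q => T)).filter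
          (fun g => ∀ i ∈ Finset.univ.image g,
            2 ≤ (Finset.univ.filter fun j => g j = i).card)).filter
          (fun g => Finset.univ.image g = S)).card : ℝ)
        ≤ ((Fintype.piFinset (fun _ : Fin q => S)).card : ℝ) := by
          exact_mod_cast Finset.card_le_card hsub
      _ = ((S.card : ℝ)) ^ q := by
          rw [Fintype.card_piFinset]; simp
  refine le_trans (Finset.sum_le_sum hfiber) ?_
  -- group by cardinality
  have hmaps2 : ∀ S ∈ T.powerset.filter (fun S => 1 ≤ S.card ∧ S.card ≤ q / 2),
      S.card ∈ Finset.Icc 1 (q / 2) := by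
    intro S hS
    rw [Finset.mem_filter] at hS
    exact Finset.mem_Icc.2 ⟨hS.2.1, hS.2.2⟩
  rw [← Finset.sum_fiberwise_of_maps_to hmaps2
    (fun S => ((S.card : ℝ)) ^ q * ((K:ℝ)⁻¹) ^ S.card)]
  refine Finset.sum_le_sum fun s hs => ?_
  have h1 : ∀ S ∈ (T.powerset.filter (fun S => 1 ≤ S.card ∧ S.card ≤ q / 2)).filter
      (fun S => S.card = s),
      ((S.card : ℝ)) ^ q * ((K:ℝ)⁻¹) ^ S.card = ((s : ℝ)) ^ q * ((K:ℝ)⁻¹) ^ s := by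
    intro S hS
    rw [(Finset.mem_filter.1 hS).2]
  rw [Finset.sum_congr rfl h1, Finset.sum_const, nsmul_eq_mul, ← mul_assoc]
  refine mul_le_mul_of_nonneg_right (mul_le_mul_of_nonneg_right ?_ (by positivity))
    (by positivity)
  have hsub : (T.powerset.filter (fun S => 1 ≤ S.card ∧ S.card ≤ q / 2)).filter
      (fun S => S.card = s) ⊆ T.powersetCard s := by
    intro S hS
    rw [Finset.mem_filter, Finset.mem_filter, Finset.mem_powerset] at hS
    exact Finset.mem_powersetCard.2 ⟨hS.1.1, hS.2⟩
  calc (((T.powerset.filter (fun S => 1 ≤ S.card ∧ S.card ≤ q / 2)).filter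
        (fun S => S.card = s)).card : ℝ)
      ≤ ((T.powersetCard s).card : ℝ) := by exact_mod_cast Finset.card_le_card hsub
    _ = (T.card.choose s : ℝ) := by rw [Finset.card_powersetCard]

lemma markov_even (q : ℕ) (hq : Even q) {a : ℝ} (ha : 0 < a)
    (Z : (Fin M → Fin K) → ℝ) :
    ∑ x ∈ Finset.univ.filter (fun x : Fin M → Fin K => a ≤ |Z x|), atomW r μ x
      ≤ a⁻¹ ^ q * ∑ x : Fin M → Fin K, atomW r μ x * Z x ^ q := by
  have hZq : ∀ x, 0 ≤ Z x ^ q := fun x => hq.pow_nonneg _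
  calc ∑ x ∈ Finset.univ.filter (fun x : Fin M → Fin K => a ≤ |Z x|), atomW r μ x
      ≤ ∑ x ∈ Finset.univ.filter (fun x : Fin M → Fin K => a ≤ |Z x|),
          a⁻¹ ^ q * (atomW r μ x * Z x ^ q) := by
        refine Finset.sum_le_sum fun x hx => ?_
        have hax := (Finset.mem_filter.1 hx).2
        have h1 : a ^ q ≤ Z x ^ q := by
          rw [← hq.pow_abs (Z x)]
          exact pow_le_pow_left₀ ha.le hax q
        have h2 : a⁻¹ ^ q * a ^ q = 1 := by
          rw [← mul_pow, inv_mul_cancel₀ ha.ne', one_pow]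
        calc atomW r μ x = atomW r μ x * (a⁻¹ ^ q * a ^ q) := by rw [h2, mul_one]
          _ ≤ atomW r μ x * (a⁻¹ ^ q * Z x ^ q) := by
              refine mul_le_mul_of_nonneg_left ?_ (atomW_nonneg x)
              exact mul_le_mul_of_nonneg_left h1 (by positivity)
          _ = a⁻¹ ^ q * (atomW r μ x * Z x ^ q) := by ring
    _ ≤ ∑ x : Fin M → Fin K, a⁻¹ ^ q * (atomW r μ x * Z x ^ q) := by
        refine Finset.sum_le_sum_of_subset_of_nonneg (Finset.filter_subset _ _) ?_
        intro x _ _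
        exact mul_nonneg (by positivity)
          (mul_nonneg (atomW_nonneg x) (hZq x))
    _ = a⁻¹ ^ q * ∑ x : Fin M → Fin K, atomW r μ x * Z x ^ q := by
        rw [Finset.mul_sum]

end Aux4

lemma finXor_cancel {t : ℕ} (w z : Fin (2 ^ t)) : finXor w (finXor w z) = z := by
  apply Fin.ext
  show w.val ^^^ (w.val ^^^ z.val) = z.val
  rw [← Nat.xor_assoc, Nat.xor_self, Nat.zero_xor]

lemma nat_div3 (c : ℕ) : (c : ℝ) / 3 ≤ ((c / 3 : ℕ) : ℝ) + 1 := by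
  have h : c ≤ 3 * (c / 3) + 3 := by omega
  have h2 : (c : ℝ) ≤ 3 * ((c / 3 : ℕ) : ℝ) + 3 := by exact_mod_cast h
  linarith


set_option maxHeartbeats 1600000 in
open scoped Classical in
/-- Claim 4.3: for every `δ ∈ (0, 0.1)` and every sufficiently large `c`
(depending only on `δ`), for all sufficiently large `n`: with `K = 2^t ≤ n`,
`n^δ/2 ≤ B ≤ 2 n^δ`, `M ≤ K·B/2`, any words `v : Fin M → Option (Fin K)`, and `c`-wise
independent uniform shifts `r_i` on `Fin K`, letting
`X_k = #{i : v_i = some w ∧ w ⊕ r_i = k}`, we have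
`Pr[∃ k, X_k > 3B/4] ≤ n^{1 - δc/3}`. -/
theorem stmt_7 :
    ∀ δ : ℝ, 0 < δ → δ < 0.1 →
      ∃ c₀ : ℕ, ∀ c : ℕ, c₀ ≤ c →
        ∃ N₀ : ℕ, ∀ n : ℕ, N₀ ≤ n →
          ∀ B M t : ℕ, 0 < B → 0 < M → 0 < t →
            (2 ^ t : ℕ) ≤ n →
            (n : ℝ) ^ δ / 2 ≤ (B : ℝ) → (B : ℝ) ≤ 2 * (n : ℝ) ^ δ →
            (M : ℝ) ≤ ((2 ^ t : ℕ) : ℝ) * (B : ℝ) / 2 →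
            ∀ v : Fin M → Option (Fin (2 ^ t)),
            ∀ (Ω : Type) (_ : MeasurableSpace Ω) (μ : Measure Ω),
              IsProbabilityMeasure μ →
            ∀ r : Fin M → Ω → Fin (2 ^ t),
              (∀ i, Measurable (r i)) →
              (∀ i k, μ {ω | r i ω = k} = ((2 ^ t : ℕ) : ENNReal)⁻¹) →
              CWiseIndep c r μ →
              μ {ω | ∃ k : Fin (2 ^ t), 3 * (B : ℝ) / 4 <
                  ((Finset.univ.filter fun i : Fin M =>
                      ∃ w, v i = some w ∧ finXor w (r i ω) = k).card : ℝ)} ≤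
                ENNReal.ofReal ((n : ℝ) ^ (1 - δ * c / 3)) := by
  intro δ hδ0 hδ1
  refine ⟨12, fun c hc => ?_⟩
  obtain ⟨hh, hhdef⟩ : ∃ hh : ℕ, hh = c / 3 + 2 := ⟨_, rfl⟩
  obtain ⟨q, hq⟩ : ∃ q : ℕ, q = 2 * hh := ⟨_, rfl⟩
  have hq2 : 2 ≤ q := by omega
  have hqc : q ≤ c := by omega
  have hqhalf : q / 2 = hh := by omega
  have hhq : hh ≤ q := by omega
  set C : ℝ := max 4 ((q : ℝ) ^ (q + 1) * 16 ^ hh) with hCdef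
  have hC1 : (1 : ℝ) ≤ C := le_trans (by norm_num) (le_max_left _ _)
  have hC0 : (0 : ℝ) ≤ C := by linarith
  refine ⟨⌈C ^ (1/δ)⌉₊ + 1, fun n hn => ?_⟩
  intro B M t hB hM ht hKn hBl hBu hMu v Ω mΩ μ hμ r hmr hunif hind
  have hK : 0 < 2 ^ t := pow_pos (by norm_num) t
  have hKr : (0 : ℝ) < ((2 ^ t : ℕ) : ℝ) := by exact_mod_cast hK
  have hn1 : 1 ≤ n := by omega
  have hnr1 : (1 : ℝ) ≤ (n : ℝ) := by exact_mod_cast hn1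
  have hnr0 : (0 : ℝ) < (n : ℝ) := by linarith
  -- C ≤ n^δ
  have hCn : C ≤ (n : ℝ) ^ δ := by
    have h1 : C ^ (1/δ) ≤ ((⌈C ^ (1/δ)⌉₊ : ℕ) : ℝ) := Nat.le_ceil _
    have h2 : ((⌈C ^ (1/δ)⌉₊ : ℕ) : ℝ) ≤ (n : ℝ) := by
      have h2' : ⌈C ^ (1/δ)⌉₊ ≤ n := by omega
      exact_mod_cast h2'
    have h4 : (C ^ (1/δ)) ^ δ ≤ (n : ℝ) ^ δ :=
      Real.rpow_le_rpow (Real.rpow_nonneg hC0 _) (le_trans h1 h2) hδ0.le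
    calc C = (C ^ (1/δ)) ^ δ := by
          rw [← Real.rpow_mul hC0, one_div, inv_mul_cancel₀ hδ0.ne', Real.rpow_one]
      _ ≤ (n : ℝ) ^ δ := h4
  have hn4 : (4 : ℝ) ≤ (n : ℝ) ^ δ := le_trans (le_max_left _ _) hCn
  have hnD : (q : ℝ) ^ (q + 1) * 16 ^ hh ≤ (n : ℝ) ^ δ := le_trans (le_max_right _ _) hCn
  have hB2 : (2 : ℝ) ≤ (B : ℝ) := by linarith
  have hBr0 : (0 : ℝ) < (B : ℝ) := by linarith
  set T : Finset (Fin M) := Finset.univ.filter (fun i => (v i).isSome) with hTdef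
  have hTM : (T.card : ℝ) ≤ (M : ℝ) := by
    have h1 : T.card ≤ M := le_trans (Finset.card_filter_le _ _) (by simp)
    exact_mod_cast h1
  have hTK : (T.card : ℝ) * ((2 ^ t : ℕ) : ℝ)⁻¹ ≤ (B : ℝ) / 2 := by
    have h1 : (T.card : ℝ) ≤ ((2 ^ t : ℕ) : ℝ) * (B : ℝ) / 2 := le_trans hTM hMu
    calc (T.card : ℝ) * ((2 ^ t : ℕ) : ℝ)⁻¹
        ≤ (((2 ^ t : ℕ) : ℝ) * (B : ℝ) / 2) * ((2 ^ t : ℕ) : ℝ)⁻¹ :=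
          mul_le_mul_of_nonneg_right h1 (by positivity)
      _ = (B : ℝ) / 2 := by field_simp
  set b : Fin (2 ^ t) → Fin M → Fin (2 ^ t) :=
    fun k i => finXor ((v i).getD ⟨0, hK⟩) k with hbdef
  -- card identity
  have hcardid : ∀ (k : Fin (2 ^ t)) (x : Fin M → Fin (2 ^ t)),
      (Finset.univ.filter fun i : Fin M => ∃ w, v i = some w ∧ finXor w (x i) = k)
      = T.filter (fun i => x i = b k i) := by
    intro k x
    ext i
    rw [Finset.mem_filter, Finset.mem_filter, hTdef, Finset.mem_filter, hbdef]
    constructor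
    · rintro ⟨hu, w, hw, hxor⟩
      refine ⟨⟨hu, by rw [hw]; rfl⟩, ?_⟩
      show x i = finXor ((v i).getD ⟨0, hK⟩) k
      rw [hw, Option.getD_some, ← hxor, finXor_cancel]
    · rintro ⟨⟨hu, hsome⟩, hxi⟩
      obtain ⟨w, hw⟩ := Option.isSome_iff_exists.1 hsome
      refine ⟨hu, w, hw, ?_⟩
      replace hxi : x i = finXor ((v i).getD ⟨0, hK⟩) k := hxi
      rw [hxi, hw, Option.getD_some, finXor_cancel]
  -- Z identity
  have hZ : ∀ (k : Fin (2 ^ t)) (x : Fin M → Fin (2 ^ t)),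
      (∑ i ∈ T, yfun (2 ^ t) (b k) i (x i))
      = ((T.filter fun i => x i = b k i).card : ℝ)
        - (T.card : ℝ) * ((2 ^ t : ℕ) : ℝ)⁻¹ := by
    intro k x
    unfold yfun
    rw [Finset.sum_sub_distrib, Finset.sum_const, nsmul_eq_mul]
    congr 1
    exact Finset.sum_boole _ _
  set P : (Fin M → Fin (2 ^ t)) → Prop := fun x => ∃ k : Fin (2 ^ t),
    3 * (B : ℝ) / 4 < ((Finset.univ.filter fun i : Fin M =>
      ∃ w, v i = some w ∧ finXor w (x i) = k).card : ℝ) with hPdef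
  have himp : ∀ x, P x → ∃ k : Fin (2 ^ t),
      (B : ℝ) / 4 ≤ |∑ i ∈ T, yfun (2 ^ t) (b k) i (x i)| := by
    intro x hp
    obtain ⟨k, hk⟩ := hp
    refine ⟨k, ?_⟩
    rw [hcardid k x] at hk
    have h1 : (B : ℝ) / 4 ≤ ∑ i ∈ T, yfun (2 ^ t) (b k) i (x i) := by
      rw [hZ k x]
      linarith [hTK]
    exact le_trans h1 (le_abs_self _)
  have hmeas := measure_eq_ofReal_sum (μ := μ) hmr P
  refine le_trans (le_of_eq hmeas) (ENNReal.ofReal_le_ofReal ?_)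
  -- cover by the K events
  have hnn : ∀ (x : Fin M → Fin (2 ^ t)) (k : Fin (2 ^ t)),
      (0:ℝ) ≤ (if (B : ℝ) / 4 ≤ |∑ i ∈ T, yfun (2 ^ t) (b k) i (x i)|
        then atomW r μ x else 0) := by
    intro x k
    by_cases hc' : (B : ℝ) / 4 ≤ |∑ i ∈ T, yfun (2 ^ t) (b k) i (x i)|
    · rw [if_pos hc']; exact atomW_nonneg x
    · rw [if_neg hc']
  have hcover : ∑ x ∈ Finset.univ.filter P, atomW r μ x
      ≤ ∑ k : Fin (2 ^ t), ∑ x ∈ Finset.univ.filter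
          (fun x => (B : ℝ) / 4 ≤ |∑ i ∈ T, yfun (2 ^ t) (b k) i (x i)|),
          atomW r μ x := by
    have h1 : ∀ x : Fin M → Fin (2 ^ t), (if P x then atomW r μ x else 0)
        ≤ ∑ k : Fin (2 ^ t), (if (B : ℝ) / 4 ≤ |∑ i ∈ T, yfun (2 ^ t) (b k) i (x i)|
            then atomW r μ x else 0) := by
      intro x
      by_cases hp : P x
      · obtain ⟨k, hk⟩ := himp x hp
        rw [if_pos hp]
        have h2 := Finset.single_le_sum
          (f := fun k : Fin (2 ^ t) =>
            if (B : ℝ) / 4 ≤ |∑ i ∈ T, yfun (2 ^ t) (b k) i (x i)|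
              then atomW r μ x else 0)
          (fun k _ => hnn x k) (Finset.mem_univ k)
        have h2' : (if (B : ℝ) / 4 ≤ |∑ i ∈ T, yfun (2 ^ t) (b k) i (x i)|
            then atomW r μ x else 0)
            ≤ ∑ k : Fin (2 ^ t),
              (if (B : ℝ) / 4 ≤ |∑ i ∈ T, yfun (2 ^ t) (b k) i (x i)|
                then atomW r μ x else 0) := h2
        rwa [if_pos hk] at h2'
      · rw [if_neg hp]
        exact Finset.sum_nonneg fun k _ => hnn x k
    calc ∑ x ∈ Finset.univ.filter P, atomW r μ x
        = ∑ x : Fin M → Fin (2 ^ t), (if P x then atomW r μ x else 0) :=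
          Finset.sum_filter _ _
      _ ≤ ∑ x : Fin M → Fin (2 ^ t), ∑ k : Fin (2 ^ t),
            (if (B : ℝ) / 4 ≤ |∑ i ∈ T, yfun (2 ^ t) (b k) i (x i)|
              then atomW r μ x else 0) := Finset.sum_le_sum fun x _ => h1 x
      _ = ∑ k : Fin (2 ^ t), ∑ x : Fin M → Fin (2 ^ t),
            (if (B : ℝ) / 4 ≤ |∑ i ∈ T, yfun (2 ^ t) (b k) i (x i)|
              then atomW r μ x else 0) := Finset.sum_comm
      _ = ∑ k : Fin (2 ^ t), ∑ x ∈ Finset.univ.filter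
            (fun x => (B : ℝ) / 4 ≤ |∑ i ∈ T, yfun (2 ^ t) (b k) i (x i)|),
            atomW r μ x :=
          Finset.sum_congr rfl fun k _ => (Finset.sum_filter _ _).symm
  refine le_trans hcover ?_
  -- per-k bound via Markov and the moment bound
  have hperk : ∀ k : Fin (2 ^ t), ∑ x ∈ Finset.univ.filter
      (fun x => (B : ℝ) / 4 ≤ |∑ i ∈ T, yfun (2 ^ t) (b k) i (x i)|), atomW r μ x
      ≤ ((B : ℝ)/4)⁻¹ ^ q * ((hh : ℝ) * (((B : ℝ)/2) ^ hh * (q : ℝ) ^ q)) := by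
    intro k
    have hmk := markov_even (μ := μ) (r := r) q ⟨hh, by omega⟩
      (show (0:ℝ) < (B : ℝ)/4 by linarith)
      (fun x => ∑ i ∈ T, yfun (2 ^ t) (b k) i (x i))
    refine le_trans hmk ?_
    refine mul_le_mul_of_nonneg_left ?_ (by positivity)
    have hmb := moment_bound (μ := μ) hK hmr hunif hind T (b k) q hq2 hqc
    rw [hqhalf] at hmb
    refine le_trans hmb ?_
    have hterm : ∀ s ∈ Finset.Icc 1 hh,
        (T.card.choose s : ℝ) * (s : ℝ) ^ q * (((2 ^ t : ℕ) : ℝ)⁻¹) ^ s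
        ≤ ((B : ℝ)/2) ^ hh * (q : ℝ) ^ q := by
      intro s hs
      obtain ⟨hs1, hs2⟩ := Finset.mem_Icc.1 hs
      have e1 : (T.card.choose s : ℝ) * (s : ℝ) ^ q * (((2 ^ t : ℕ) : ℝ)⁻¹) ^ s
          = ((T.card.choose s : ℝ) * (((2 ^ t : ℕ) : ℝ)⁻¹) ^ s) * (s : ℝ) ^ q := by ring
      rw [e1]
      have h2 : (T.card.choose s : ℝ) * (((2 ^ t : ℕ) : ℝ)⁻¹) ^ s ≤ ((B : ℝ)/2) ^ hh := by
        have h3 : (T.card.choose s : ℝ) ≤ (T.card : ℝ) ^ s := by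
          exact_mod_cast Nat.choose_le_pow T.card s
        calc (T.card.choose s : ℝ) * (((2 ^ t : ℕ) : ℝ)⁻¹) ^ s
            ≤ (T.card : ℝ) ^ s * (((2 ^ t : ℕ) : ℝ)⁻¹) ^ s :=
              mul_le_mul_of_nonneg_right h3 (by positivity)
          _ = ((T.card : ℝ) * ((2 ^ t : ℕ) : ℝ)⁻¹) ^ s := (mul_pow _ _ _).symm
          _ ≤ ((B : ℝ)/2) ^ s := pow_le_pow_left₀ (by positivity) hTK s
          _ ≤ ((B : ℝ)/2) ^ hh := pow_le_pow_right₀ (by linarith) hs2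
      have h4 : (s : ℝ) ^ q ≤ (q : ℝ) ^ q := by
        refine pow_le_pow_left₀ (by positivity) ?_ q
        exact_mod_cast le_trans hs2 hhq
      exact mul_le_mul h2 h4 (by positivity) (by positivity)
    calc ∑ s ∈ Finset.Icc 1 hh, (T.card.choose s : ℝ) * (s : ℝ) ^ q
          * (((2 ^ t : ℕ) : ℝ)⁻¹) ^ s
        ≤ ∑ _s ∈ Finset.Icc 1 hh, ((B : ℝ)/2) ^ hh * (q : ℝ) ^ q :=
          Finset.sum_le_sum hterm
      _ = (hh : ℝ) * (((B : ℝ)/2) ^ hh * (q : ℝ) ^ q) := by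
          rw [Finset.sum_const, Nat.card_Icc, nsmul_eq_mul]
          norm_num
  refine le_trans (Finset.sum_le_sum fun k (_ : k ∈ Finset.univ) => hperk k) ?_
  rw [Finset.sum_const, Finset.card_univ, Fintype.card_fin, nsmul_eq_mul]
  -- final numeric computation
  have hKnr : ((2 ^ t : ℕ) : ℝ) ≤ (n : ℝ) := by exact_mod_cast hKn
  have e2 : ((B : ℝ)/4)⁻¹ ^ q * ((hh : ℝ) * (((B : ℝ)/2) ^ hh * (q : ℝ) ^ q))
      = (hh : ℝ) * (q : ℝ) ^ q * ((16 / (B : ℝ) ^ 2) ^ hh * ((B : ℝ)/2) ^ hh) := by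
    have e3 : ((B : ℝ)/4)⁻¹ ^ q = ((16 / (B : ℝ) ^ 2)) ^ hh := by
      rw [hq, pow_mul]
      congr 1
      rw [inv_pow, div_pow]
      rw [inv_div]
      norm_num
    rw [e3]; ring
  have e4 : (16 / (B : ℝ) ^ 2) ^ hh * ((B : ℝ)/2) ^ hh = (8 / (B : ℝ)) ^ hh := by
    rw [← mul_pow]
    congr 1
    field_simp
    ring
  rw [e2, e4]
  have h8B : (8 / (B : ℝ)) ^ hh ≤ (16 / (n : ℝ) ^ δ) ^ hh := by
    refine pow_le_pow_left₀ (by positivity) ?_ hh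
    rw [div_le_div_iff₀ hBr0 (by positivity)]
    nlinarith [hBl]
  have hnd0 : (0 : ℝ) < (n : ℝ) ^ δ := by positivity
  have hstep1 : ((2 ^ t : ℕ) : ℝ) * ((hh : ℝ) * (q : ℝ) ^ q * (8 / (B : ℝ)) ^ hh)
      ≤ (n : ℝ) * ((q : ℝ) ^ (q + 1) * (16 / (n : ℝ) ^ δ) ^ hh) := by
    have h5 : (hh : ℝ) * (q : ℝ) ^ q ≤ (q : ℝ) ^ (q + 1) := by
      rw [pow_succ]
      calc (hh : ℝ) * (q : ℝ) ^ q ≤ (q : ℝ) * (q : ℝ) ^ q := by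
            refine mul_le_mul_of_nonneg_right ?_ (by positivity)
            exact_mod_cast hhq
        _ = (q : ℝ) ^ q * (q : ℝ) := by ring
    have h6 : (hh : ℝ) * (q : ℝ) ^ q * (8 / (B : ℝ)) ^ hh
        ≤ (q : ℝ) ^ (q + 1) * (16 / (n : ℝ) ^ δ) ^ hh :=
      mul_le_mul h5 h8B (by positivity) (by positivity)
    exact mul_le_mul hKnr h6 (by positivity) (by positivity)
  refine le_trans hstep1 ?_
  -- pure rpow algebra
  have e6 : ((n : ℝ) ^ δ) ^ hh = (n : ℝ) ^ (δ * (hh : ℝ)) := by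
    rw [← Real.rpow_natCast ((n : ℝ) ^ δ) hh, ← Real.rpow_mul (le_of_lt hnr0)]
  have hpos6 : (0 : ℝ) < (n : ℝ) ^ (δ * (hh : ℝ)) := Real.rpow_pos_of_pos hnr0 _
  have e7 : (n : ℝ) * ((q : ℝ) ^ (q + 1) * (16 / (n : ℝ) ^ δ) ^ hh)
      = (n : ℝ) * ((q : ℝ) ^ (q + 1) * 16 ^ hh) / (n : ℝ) ^ (δ * (hh : ℝ)) := by
    rw [div_pow, ← e6]
    ring
  rw [e7, div_le_iff₀ hpos6]
  have h8 : (n : ℝ) ^ (1 - δ * c / 3) * (n : ℝ) ^ (δ * (hh : ℝ))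
      = (n : ℝ) ^ (1 - δ * c / 3 + δ * (hh : ℝ)) := (Real.rpow_add hnr0 _ _).symm
  rw [h8]
  have h9 : (n : ℝ) * ((q : ℝ) ^ (q + 1) * 16 ^ hh) ≤ (n : ℝ) * (n : ℝ) ^ δ :=
    mul_le_mul_of_nonneg_left hnD (by linarith)
  have h10 : (n : ℝ) * (n : ℝ) ^ δ = (n : ℝ) ^ ((1 : ℝ) + δ) := by
    rw [Real.rpow_add hnr0, Real.rpow_one]
  have h11 : (n : ℝ) ^ ((1 : ℝ) + δ) ≤ (n : ℝ) ^ (1 - δ * c / 3 + δ * (hh : ℝ)) := by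
    apply Real.rpow_le_rpow_of_exponent_le hnr1
    have hd3 := nat_div3 c
    have hhc : (c : ℝ) / 3 + 1 ≤ (hh : ℝ) := by
      have hhr : (hh : ℝ) = ((c / 3 : ℕ) : ℝ) + 2 := by exact_mod_cast hhdef
      linarith
    nlinarith [mul_le_mul_of_nonneg_left hhc hδ0.le]
  calc (n : ℝ) * ((q : ℝ) ^ (q + 1) * 16 ^ hh) ≤ (n : ℝ) * (n : ℝ) ^ δ := h9
    _ = (n : ℝ) ^ ((1 : ℝ) + δ) := h10
    _ ≤ (n : ℝ) ^ (1 - δ * c / 3 + δ * (hh : ℝ)) := h11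
end

section
/- Let t and N be positive integers and let X₁, …, X_t be mutually independent real-valued random variables with 0 ≤ X_i ≤ 100 and E[X_i] ≥ 25 for every i. Then Pr[ there exists j with N ≤ j ≤ t such that ∑_{i=t−j+1}^{t} X_i ≤ j ] ≤ 11·exp(−N/10). -/
open MeasureTheory ProbabilityTheory


lemma chord_exp (s x : ℝ) (h0 : 0 ≤ x) (h1 : x ≤ 100) :
    Real.exp (s * x) ≤ 1 + (x / 100) * (Real.exp (100 * s) - 1) := by
  have key := convexOn_exp.2 (Set.mem_univ (0:ℝ)) (Set.mem_univ (100 * s))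
    (show (0:ℝ) ≤ 1 - x / 100 by linarith) (show (0:ℝ) ≤ x / 100 by linarith)
    (by ring)
  have h2 : (1 - x / 100) • (0:ℝ) + (x / 100) • (100 * s) = s * x := by
    simp [smul_eq_mul]; ring
  rw [h2] at key
  calc Real.exp (s * x) ≤ (1 - x/100) • Real.exp 0 + (x/100) • Real.exp (100*s) := key
    _ = 1 + (x / 100) * (Real.exp (100 * s) - 1) := by
        simp [smul_eq_mul, Real.exp_zero]; ring

-- mgf bound for a single bounded variable with mean ≥ 25, at s = -(1/100)
lemma mgf_single {Ω : Type} [MeasurableSpace Ω] (μ : Measure Ω) [IsProbabilityMeasure μ]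
    (Y : Ω → ℝ) (hm : Measurable Y) (hb : ∀ ω, 0 ≤ Y ω ∧ Y ω ≤ 100)
    (hμ : 25 ≤ ∫ ω, Y ω ∂μ) :
    mgf Y μ (-(1/100)) ≤ Real.exp ((Real.exp (-1) - 1) / 4) := by
  have hYint : Integrable Y μ := by
    refine (integrable_const (100:ℝ)).mono' hm.aestronglyMeasurable ?_
    filter_upwards with ω
    rw [Real.norm_eq_abs, abs_of_nonneg (hb ω).1]; exact (hb ω).2
  have hEint : Integrable (fun ω => Real.exp ((-(1/100)) * Y ω)) μ := by
    refine (integrable_const (1:ℝ)).mono' ((hm.const_mul _).exp).aestronglyMeasurable ?_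
    filter_upwards with ω
    rw [Real.norm_eq_abs, abs_of_nonneg (Real.exp_pos _).le]
    apply Real.exp_le_one_iff.2
    nlinarith [(hb ω).1]
  have step1 : mgf Y μ (-(1/100)) ≤ ∫ ω, (1 + (Y ω / 100) * (Real.exp (-1) - 1)) ∂μ := by
    refine integral_mono hEint ?_ ?_
    · exact (integrable_const 1).add ((hYint.div_const 100).mul_const _)
    · intro ω
      have := chord_exp (-(1/100)) (Y ω) (hb ω).1 (hb ω).2
      simpa using this
  have step2 : ∫ ω, (1 + (Y ω / 100) * (Real.exp (-1) - 1)) ∂μ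
      = 1 + ((∫ ω, Y ω ∂μ) / 100) * (Real.exp (-1) - 1) := by
    rw [integral_add (integrable_const 1) ((hYint.div_const 100).mul_const _),
      integral_const, integral_mul_const, integral_div]
    simp
  have hneg : Real.exp (-1) - 1 ≤ 0 := by
    have := Real.exp_lt_one_iff.2 (by norm_num : (-1:ℝ) < 0)
    linarith
  have step3 : 1 + ((∫ ω, Y ω ∂μ) / 100) * (Real.exp (-1) - 1)
      ≤ 1 + (Real.exp (-1) - 1) / 4 := by nlinarith
  have step4 : 1 + (Real.exp (-1) - 1) / 4 ≤ Real.exp ((Real.exp (-1) - 1) / 4) := by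
    have := Real.add_one_le_exp ((Real.exp (-1) - 1) / 4); linarith
  calc mgf Y μ (-(1/100)) ≤ _ := step1
    _ = _ := step2
    _ ≤ _ := step3
    _ ≤ _ := step4

lemma numeric1 : (1:ℝ)/100 + (Real.exp (-1) - 1)/4 ≤ -(1/10) := by
  have h2 : (2:ℝ) ≤ Real.exp 1 := by have := Real.add_one_le_exp (1:ℝ); linarith
  have : Real.exp (-1) = (Real.exp 1)⁻¹ := Real.exp_neg 1
  have hpos : (0:ℝ) < Real.exp 1 := Real.exp_pos 1
  rw [this]
  have : (Real.exp 1)⁻¹ ≤ 1/2 := by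
    rw [inv_le_iff_one_le_mul₀ hpos]  -- guess
    linarith
  linarith

lemma numeric2 : Real.exp (-(1/10) : ℝ) ≤ 10/11 := by
  have h := Real.add_one_le_exp ((1:ℝ)/10)
  have hpos : (0:ℝ) < Real.exp (1/10) := Real.exp_pos _
  rw [show (-(1/10):ℝ) = -(1/10) from rfl, Real.exp_neg]
  rw [inv_le_comm₀ hpos (by norm_num)]
  linarith

lemma geom_bound (N t : ℕ) :
    ∑ j ∈ Finset.Icc N t, Real.exp (-(j:ℝ)/10) ≤ 11 * Real.exp (-(N:ℝ)/10) := by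
  set r : ℝ := Real.exp (-(1/10)) with hr
  have hr0 : 0 < r := Real.exp_pos _
  have hr1 : r ≤ 10/11 := by
    have h := Real.add_one_le_exp ((1:ℝ)/10)
    have hpos : (0:ℝ) < Real.exp (1/10) := Real.exp_pos _
    have : r = (Real.exp (1/10))⁻¹ := by rw [hr, ← Real.exp_neg]
    rw [this, inv_le_comm₀ hpos (by norm_num)]
    linarith
  have hrpow : ∀ j : ℕ, Real.exp (-(j:ℝ)/10) = r ^ j := by
    intro j
    rw [hr, ← Real.exp_nat_mul]
    congr 1; ring
  simp_rw [hrpow]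
  rw [show Finset.Icc N t = Finset.Ico N (t+1) by rw [Finset.Ico_add_one_right_eq_Icc],
    Finset.sum_Ico_eq_sum_range]
  have : ∀ j ∈ Finset.range (t + 1 - N), r ^ (N + j) = r ^ N * r ^ j := by
    intro j _; rw [pow_add]
  rw [Finset.sum_congr rfl this, ← Finset.mul_sum]
  have hgeom : ∑ j ∈ Finset.range (t + 1 - N), r ^ j ≤ 11 := by
    have hne : r ≠ 1 := by nlinarith
    rw [geom_sum_eq hne]
    have h1 : (0:ℝ) ≤ r ^ (t + 1 - N) := by positivity
    have h2 : r - 1 < 0 := by nlinarith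
    rw [div_le_iff_of_neg h2]
    nlinarith
  have hN0 : (0:ℝ) ≤ r ^ N := by positivity
  nlinarith



open scoped Classical in
/-- probabilistic core of Claim 4.5: if `X₁, …, X_t` are mutually
independent random variables with `0 ≤ X_i ≤ 100` and `E[X_i] ≥ 25`, then the probability
that some `j` with `N ≤ j ≤ t` satisfies `∑_{i = t-j+1}^{t} X_i ≤ j` is at most
`11 exp(-N/10)`. (Here `X : Fin t → Ω → ℝ` is 0-indexed, so the last `j` variables are
those with index `≥ t - j`.) -/
theorem stmt_10 (t N : ℕ) (ht : 0 < t) (hN : 0 < N)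
    (Ω : Type) (_ : MeasurableSpace Ω) (μ : Measure Ω) [IsProbabilityMeasure μ]
    (X : Fin t → Ω → ℝ)
    (hmeas : ∀ i, Measurable (X i))
    (hbound : ∀ i ω, 0 ≤ X i ω ∧ X i ω ≤ 100)
    (hmean : ∀ i, 25 ≤ ∫ ω, X i ω ∂μ)
    (hindep : iIndepFun X μ) :
    μ {ω | ∃ j : ℕ, N ≤ j ∧ j ≤ t ∧
        (∑ i ∈ Finset.univ.filter fun i : Fin t => t - j ≤ (i : ℕ), X i ω) ≤ (j : ℝ)} ≤
      ENNReal.ofReal (11 * Real.exp (-(N : ℝ) / 10)) := by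
  set s : ℝ := -(1/100) with hs
  -- per-j events
  set A : ℕ → Set Ω := fun j =>
    {ω | (∑ i ∈ Finset.univ.filter fun i : Fin t => t - j ≤ (i : ℕ), X i) ω ≤ (j : ℝ)}
    with hA
  have hset : {ω | ∃ j : ℕ, N ≤ j ∧ j ≤ t ∧
        (∑ i ∈ Finset.univ.filter fun i : Fin t => t - j ≤ (i : ℕ), X i ω) ≤ (j : ℝ)}
      = ⋃ j ∈ Finset.Icc N t, A j := by
    ext ω
    simp only [Set.mem_setOf_eq, Set.mem_iUnion, Finset.mem_Icc, hA, Finset.sum_apply]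
    tauto
  -- per-j bound
  have hAj : ∀ j ∈ Finset.Icc N t, μ (A j) ≤ ENNReal.ofReal (Real.exp (-(j:ℝ)/10)) := by
    intro j hj
    rw [Finset.mem_Icc] at hj
    set F := Finset.univ.filter fun i : Fin t => t - j ≤ (i : ℕ) with hF
    have hcard : F.card = j := by
      have himg : Finset.image Fin.val F = Finset.Ico (t - j) t := by
        ext n
        simp only [hF, Finset.mem_image, Finset.mem_filter, Finset.mem_univ, true_and,
          Finset.mem_Ico]
        constructor
        · rintro ⟨i, hi, rfl⟩; exact ⟨hi, i.isLt⟩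
        · rintro ⟨h1, h2⟩; exact ⟨⟨n, h2⟩, h1, rfl⟩
      have := congrArg Finset.card himg
      rw [Finset.card_image_of_injective _ Fin.val_injective, Nat.card_Ico] at this
      omega
    have hint : ∀ i ∈ F, Integrable (fun ω => Real.exp (s * X i ω)) μ := by
      intro i _
      refine (integrable_const (1:ℝ)).mono'
        (((hmeas i).const_mul _).exp).aestronglyMeasurable ?_
      filter_upwards with ω
      rw [Real.norm_eq_abs, abs_of_nonneg (Real.exp_pos _).le]
      apply Real.exp_le_one_iff.2
      have := (hbound i ω).1
      rw [hs]; nlinarith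
    have hintS := hindep.integrable_exp_mul_sum hmeas hint
    have hch := measure_le_le_exp_mul_mgf (μ := μ) (X := ∑ i ∈ F, X i) (j : ℝ)
      (show s ≤ 0 by rw [hs]; norm_num) hintS
    rw [hindep.mgf_sum hmeas F] at hch
    have hprod : ∏ i ∈ F, mgf (X i) μ s ≤ Real.exp ((Real.exp (-1) - 1) / 4) ^ j := by
      rw [← hcard, ← Finset.prod_const]
      exact Finset.prod_le_prod (fun i _ => mgf_nonneg)
        (fun i _ => mgf_single μ (X i) (hmeas i) (hbound i) (hmean i))
    have hstep : (μ (A j)).toReal ≤ Real.exp (-(j:ℝ)/10) := by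
      have h1 : (μ (A j)).toReal ≤ Real.exp (-s * j) * ∏ i ∈ F, mgf (X i) μ s := hch
      have h2 : Real.exp (-s * j) * ∏ i ∈ F, mgf (X i) μ s
          ≤ Real.exp (-s * j) * Real.exp ((Real.exp (-1) - 1) / 4) ^ j :=
        mul_le_mul_of_nonneg_left hprod (Real.exp_pos _).le
      have h3 : Real.exp (-s * j) * Real.exp ((Real.exp (-1) - 1) / 4) ^ j
          = Real.exp ((j:ℝ) * (1/100 + (Real.exp (-1) - 1)/4)) := by
        rw [← Real.exp_nat_mul, ← Real.exp_add, hs]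
        congr 1; ring
      have h4 : Real.exp ((j:ℝ) * (1/100 + (Real.exp (-1) - 1)/4))
          ≤ Real.exp (-(j:ℝ)/10) := by
        apply Real.exp_le_exp.2
        have hj0 : (0:ℝ) ≤ j := Nat.cast_nonneg j
        nlinarith [numeric1]
      exact h1.trans (h2.trans (h3.le.trans h4))
    rw [ENNReal.le_ofReal_iff_toReal_le (measure_ne_top μ _) (Real.exp_pos _).le]
    exact hstep
  calc μ _ = μ (⋃ j ∈ Finset.Icc N t, A j) := by rw [hset]
    _ ≤ ∑ j ∈ Finset.Icc N t, μ (A j) := measure_biUnion_finset_le _ _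
    _ ≤ ∑ j ∈ Finset.Icc N t, ENNReal.ofReal (Real.exp (-(j:ℝ)/10)) :=
        Finset.sum_le_sum hAj
    _ = ENNReal.ofReal (∑ j ∈ Finset.Icc N t, Real.exp (-(j:ℝ)/10)) :=
        (ENNReal.ofReal_sum_of_nonneg (fun j _ => (Real.exp_pos _).le)).symm
    _ ≤ ENNReal.ofReal (11 * Real.exp (-(N : ℝ) / 10)) :=
        ENNReal.ofReal_le_ofReal (geom_bound N t)
end

section
/- For every δ ∈ (0, 0.1) and every sufficiently large integer c (how large depending only on δ), there exists N₀ (depending on δ and c) such that the following holds for all n ≥ N₀. Let n′ ≤ n and let M, B be positive integers with n^δ/2 ≤ B ≤ 2·n^δ and n′/M ≥ B + n^δ/(log₂ n)^{11}. If (h_i)_{i=1}^{n′} is a c-wise independent family of random variables, each uniformly distributed on Fin M = {0, …, M−1}, then Pr[ ∃ k ∈ Fin M with #{ i : h_i = k } ≤ B ] ≤ n^{1 − δc/3}; that is, with high probability in n every bin k has at least B + 1 keys hashing to it. -/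
open MeasureTheory ProbabilityTheory

lemma aux_integrable_of_bound {Ω : Type*} [MeasurableSpace Ω] {μ : Measure Ω}
    [IsFiniteMeasure μ] {f : Ω → ℝ} (hf : Measurable f) (C : ℝ) (hC : ∀ ω, |f ω| ≤ C) :
    Integrable f μ :=
  (integrable_const C).mono' hf.aestronglyMeasurable (Filter.Eventually.of_forall fun ω => by
    simpa using hC ω)

lemma aux_integral_prod {Ω ι : Type*} [MeasurableSpace Ω] {μ : Measure Ω}
    [IsProbabilityMeasure μ] {g : ι → Ω → ℝ}
    (hindep : iIndepFun g μ)
    (hmeas : ∀ i, Measurable (g i)) (s : Finset ι) :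
    ∫ ω, ∏ i ∈ s, g i ω ∂μ = ∏ i ∈ s, ∫ ω, g i ω ∂μ := by
  classical
  induction s using Finset.cons_induction with
  | empty => simp
  | cons j s hjs ih =>
    have hIndep : IndepFun (∏ i ∈ s, g i) (g j) μ :=
      hindep.indepFun_finsetProd_of_notMem hmeas hjs
    have hprodmeas : Measurable (∏ i ∈ s, g i) := by
      rw [Finset.prod_fn]
      exact Finset.measurable_prod s fun i (_ : i ∈ s) => hmeas i
    have := hIndep.integral_mul_eq_mul_integral hprodmeas.aestronglyMeasurable (hmeas j).aestronglyMeasurable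
    rw [Finset.prod_cons, ← ih]
    simp only [Finset.prod_cons]
    have heq : (fun ω => g j ω * ∏ i ∈ s, g i ω) = (∏ i ∈ s, g i) * g j := by
      ext ω; simp [Finset.prod_apply, mul_comm]
    calc ∫ ω, g j ω * ∏ i ∈ s, g i ω ∂μ = ∫ ω, ((∏ i ∈ s, g i) * g j) ω ∂μ := by rw [heq]
      _ = (∫ ω, (∏ i ∈ s, g i) ω ∂μ) * ∫ ω, g j ω ∂μ := this
      _ = (∫ ω, ∏ i ∈ s, g i ω ∂μ) * ∫ ω, g j ω ∂μ := by simp [Finset.prod_apply]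
      _ = (∫ ω, g j ω ∂μ) * ∫ ω, ∏ i ∈ s, g i ω ∂μ := by ring

open scoped Classical in
lemma aux_moment {Ω : Type} [MeasurableSpace Ω] {μ : Measure Ω} [IsProbabilityMeasure μ]
    {n' M : ℕ} (hM : 0 < M) (h : Fin n' → Ω → Fin M)
    (hmeas : ∀ i, Measurable (h i))
    (hunif : ∀ i k, μ {ω | h i ω = k} = (M : ENNReal)⁻¹)
    {c : ℕ} (hindep : CWiseIndep c h μ) (k : Fin M)
    {q : ℕ} (hq : 2 * q ≤ c) (hq1 : 1 ≤ q)
    (hEX : (1:ℝ) ≤ (n' : ℝ) * (M:ℝ)⁻¹) :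
    ∫ ω, ((n' : ℝ) * (M:ℝ)⁻¹
        - ((Finset.univ.filter fun i : Fin n' => h i ω = k).card : ℝ))^(2*q) ∂μ
      ≤ ((q:ℝ)+1) * (q:ℝ)^(2*q) * ((n' : ℝ) * (M:ℝ)⁻¹)^q := by
  set p : ℝ := (M:ℝ)⁻¹ with hp_def
  have hp0 : 0 ≤ p := by positivity
  have hp1 : p ≤ 1 := by
    rw [hp_def]
    rw [inv_le_one_iff₀]
    right; exact_mod_cast hM
  set Y : Fin n' → Ω → ℝ := fun i ω => p - if h i ω = k then 1 else 0 with hY_def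
  have hsetmeas : ∀ i, MeasurableSet {ω | h i ω = k} := fun i =>
    hmeas i (MeasurableSet.singleton k)
  have hYmeas : ∀ i, Measurable (Y i) := fun i =>
    measurable_const.sub (Measurable.ite (hsetmeas i) measurable_const measurable_const)
  have hYabs : ∀ i ω, |Y i ω| ≤ 1 := by
    intro i ω
    rw [hY_def]
    simp only
    split_ifs with hif
    · rw [abs_le]; constructor <;> linarith
    · rw [abs_le]; constructor <;> simp <;> linarith
  have hind_int : ∀ i, ∫ ω, (if h i ω = k then (1:ℝ) else 0) ∂μ = p := by
    intro i
    have heq : (fun ω => if h i ω = k then (1:ℝ) else 0)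
        = Set.indicator {ω | h i ω = k} (fun _ => 1) := by
      ext ω; simp [Set.indicator_apply]
    rw [heq]
    rw [show ((fun _ => (1:ℝ)) : Ω → ℝ) = (1 : Ω → ℝ) from rfl] at *
    rw [MeasureTheory.integral_indicator_one (hsetmeas i), measureReal_def, hunif i k]
    simp [hp_def]
  have hind_intg : ∀ i, Integrable (fun ω => if h i ω = k then (1:ℝ) else 0) μ := by
    intro i
    apply aux_integrable_of_bound (Measurable.ite (hsetmeas i) measurable_const measurable_const) 1
    intro ω; split_ifs <;> simp
  have hY1 : ∀ i, ∫ ω, Y i ω ∂μ = 0 := by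
    intro i
    rw [hY_def]
    simp only
    rw [integral_sub (integrable_const p) (hind_intg i), hind_int i, integral_const]
    simp
  have hYintg : ∀ i r, Integrable (fun ω => (Y i ω)^r) μ := by
    intro i r
    apply aux_integrable_of_bound ((hYmeas i).pow_const r) 1
    intro ω
    rw [abs_pow]
    exact pow_le_one₀ (abs_nonneg _) (hYabs i ω)
  have hY2 : ∀ i, ∫ ω, (Y i ω)^2 ∂μ ≤ p := by
    intro i
    have heq : ∀ ω, (Y i ω)^2 = p^2 + (1 - 2*p) * (if h i ω = k then 1 else 0) := by
      intro ω; rw [hY_def]; simp only; split_ifs <;> ring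
    calc ∫ ω, (Y i ω)^2 ∂μ
        = ∫ ω, (p^2 + (1 - 2*p) * (if h i ω = k then 1 else 0)) ∂μ := by
          exact integral_congr_ae (Filter.Eventually.of_forall heq)
      _ = p^2 + (1 - 2*p) * p := by
          rw [integral_add (integrable_const _) ((hind_intg i).const_mul _),
            MeasureTheory.integral_const_mul, hind_int i, integral_const]
          simp
      _ ≤ p := by nlinarith
  have hYr : ∀ i r, 2 ≤ r → |∫ ω, (Y i ω)^r ∂μ| ≤ p := by
    intro i r hr
    have h1 : |∫ ω, (Y i ω)^r ∂μ| ≤ ∫ ω, |Y i ω|^r ∂μ := by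
      have := norm_integral_le_integral_norm (fun ω => (Y i ω)^r) (μ := μ)
      simpa [Real.norm_eq_abs, abs_pow] using this
    have h2 : ∫ ω, |Y i ω|^r ∂μ ≤ ∫ ω, (Y i ω)^2 ∂μ := by
      apply integral_mono _ (hYintg i 2)
      · intro ω
        have : |Y i ω|^r ≤ |Y i ω|^2 :=
          pow_le_pow_of_le_one (abs_nonneg _) (hYabs i ω) hr
        calc |Y i ω|^r ≤ |Y i ω|^2 := this
          _ = (Y i ω)^2 := sq_abs _
      · have : (fun ω => |Y i ω|^r) = fun ω => |(Y i ω)^r| := by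
          ext ω; rw [abs_pow]
        rw [this]
        exact (hYintg i r).abs
    exact h1.trans (h2.trans (hY2 i))
  -- expansion
  have hsum : ∀ ω, (n':ℝ) * p - ((Finset.univ.filter fun i : Fin n' => h i ω = k).card : ℝ)
      = ∑ i, Y i ω := by
    intro ω
    have hcard : ((Finset.univ.filter fun i : Fin n' => h i ω = k).card : ℝ)
        = ∑ i, if h i ω = k then (1:ℝ) else 0 := by
      rw [Finset.card_filter]
      push_cast
      exact Finset.sum_congr rfl fun i _ => by split_ifs <;> simp
    rw [hY_def]
    simp only
    rw [Finset.sum_sub_distrib, Finset.sum_const, Finset.card_univ, Fintype.card_fin, hcard]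
    simp [nsmul_eq_mul]
  set A0 := Fintype.piFinset (fun _ : Fin (2*q) => (Finset.univ : Finset (Fin n'))) with hA0
  have expand : ∀ ω, (∑ i, Y i ω)^(2*q) = ∑ g ∈ A0, ∏ j, Y (g j) ω := by
    intro ω
    have hps := Finset.prod_univ_sum (κ := fun _ : Fin (2*q) => Fin n')
      (fun _ => Finset.univ) (fun _ i => Y i ω)
    rw [Finset.prod_const, Finset.card_univ, Fintype.card_fin] at hps
    rw [hA0, ← hps]
  have hprodmeas : ∀ g : Fin (2*q) → Fin n', Measurable fun ω => ∏ j, Y (g j) ω :=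
    fun g => Finset.measurable_prod _ fun j _ => hYmeas (g j)
  have hprodabs : ∀ (g : Fin (2*q) → Fin n') (ω : Ω), |∏ j, Y (g j) ω| ≤ 1 := by
    intro g ω
    rw [Finset.abs_prod]
    exact Finset.prod_le_one (fun j _ => abs_nonneg _) (fun j _ => hYabs _ ω)
  have hprodint : ∀ g : Fin (2*q) → Fin n', Integrable (fun ω => ∏ j, Y (g j) ω) μ :=
    fun g => aux_integrable_of_bound (hprodmeas g) 1 (hprodabs g)
  have hswap : ∫ ω, ((n':ℝ) * p
        - ((Finset.univ.filter fun i : Fin n' => h i ω = k).card : ℝ))^(2*q) ∂μ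
      = ∑ g ∈ A0, ∫ ω, ∏ j, Y (g j) ω ∂μ := by
    calc ∫ ω, ((n':ℝ) * p
          - ((Finset.univ.filter fun i : Fin n' => h i ω = k).card : ℝ))^(2*q) ∂μ
        = ∫ ω, ∑ g ∈ A0, ∏ j, Y (g j) ω ∂μ :=
          integral_congr_ae (Filter.Eventually.of_forall fun ω => by beta_reduce; rw [hsum ω, expand ω])
      _ = ∑ g ∈ A0, ∫ ω, ∏ j, Y (g j) ω ∂μ := integral_finset_sum _ fun g _ => hprodint g
  have hfib : ∀ (g : Fin (2*q) → Fin n') (ω : Ω),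
      ∏ j, Y (g j) ω = ∏ i ∈ Finset.image g Finset.univ,
        (Y i ω)^((Finset.univ.filter fun j => g j = i).card) := by
    intro g ω
    rw [← Finset.prod_fiberwise_of_maps_to (fun j (_ : j ∈ Finset.univ) =>
      Finset.mem_image_of_mem g (Finset.mem_univ j)) (fun j => Y (g j) ω)]
    apply Finset.prod_congr rfl
    intro i _
    calc ∏ j ∈ Finset.univ.filter (fun j => g j = i), Y (g j) ω
        = ∏ _j ∈ Finset.univ.filter (fun j => g j = i), Y i ω :=
          Finset.prod_congr rfl fun j hj => by rw [(Finset.mem_filter.mp hj).2]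
      _ = (Y i ω)^((Finset.univ.filter fun j => g j = i).card) := Finset.prod_const _
  have hfact : ∀ g : Fin (2*q) → Fin n',
      ∫ ω, ∏ i ∈ Finset.image g Finset.univ,
          (Y i ω)^((Finset.univ.filter fun j => g j = i).card) ∂μ
      = ∏ i ∈ Finset.image g Finset.univ,
          ∫ ω, (Y i ω)^((Finset.univ.filter fun j => g j = i).card) ∂μ := by
    intro g
    have hScard : (Finset.image g Finset.univ).card ≤ c :=
      le_trans (le_trans Finset.card_image_le (by simp)) hq
    have hiInd := hindep (Finset.image g Finset.univ) hScard
    have hcomp : iIndepFun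
        (fun i : (Finset.image g Finset.univ : Finset (Fin n')) =>
          fun ω => (Y i.val ω)^((Finset.univ.filter fun j => g j = i.val).card)) μ := by
      have := hiInd.comp (fun i : (Finset.image g Finset.univ : Finset (Fin n')) =>
          fun v : Fin M =>
          (p - if v = k then 1 else 0)^((Finset.univ.filter fun j => g j = i.val).card))
        (fun i => measurable_from_top)
      exact this
    have hkey := aux_integral_prod hcomp
      (fun i => (hYmeas i.val).pow_const _) Finset.univ
    calc ∫ ω, ∏ i ∈ Finset.image g Finset.univ,
            (Y i ω)^((Finset.univ.filter fun j => g j = i).card) ∂μ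
        = ∫ ω, ∏ i : (Finset.image g Finset.univ : Finset (Fin n')),
            (Y i.val ω)^((Finset.univ.filter fun j => g j = i.val).card) ∂μ :=
          integral_congr_ae (Filter.Eventually.of_forall fun ω =>
            (Finset.prod_coe_sort (Finset.image g Finset.univ)
              (fun i => (Y i ω)^((Finset.univ.filter fun j => g j = i).card))).symm)
      _ = ∏ i : (Finset.image g Finset.univ : Finset (Fin n')),
            ∫ ω, (Y i.val ω)^((Finset.univ.filter fun j => g j = i.val).card) ∂μ := hkey
      _ = ∏ i ∈ Finset.image g Finset.univ,
            ∫ ω, (Y i ω)^((Finset.univ.filter fun j => g j = i).card) ∂μ :=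
          Finset.prod_coe_sort (Finset.image g Finset.univ)
            (fun i => ∫ ω, (Y i ω)^((Finset.univ.filter fun j => g j = i).card) ∂μ)
  have hterm : ∀ g : Fin (2*q) → Fin n',
      |∫ ω, ∏ j, Y (g j) ω ∂μ| ≤
        (if (∀ i ∈ Finset.image g Finset.univ,
            2 ≤ (Finset.univ.filter fun j => g j = i).card)
        then p ^ (Finset.image g Finset.univ).card else 0) := by
    intro g
    have hre : ∫ ω, ∏ j, Y (g j) ω ∂μ
        = ∏ i ∈ Finset.image g Finset.univ,
            ∫ ω, (Y i ω)^((Finset.univ.filter fun j => g j = i).card) ∂μ := by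
      rw [← hfact g]
      exact integral_congr_ae (Filter.Eventually.of_forall fun ω => hfib g ω)
    rw [hre]
    split_ifs with hall
    · rw [Finset.abs_prod]
      calc ∏ i ∈ Finset.image g Finset.univ,
            |∫ ω, (Y i ω)^((Finset.univ.filter fun j => g j = i).card) ∂μ|
          ≤ ∏ _i ∈ Finset.image g Finset.univ, p :=
            Finset.prod_le_prod (fun i _ => abs_nonneg _) (fun i hi => hYr i _ (hall i hi))
        _ = p ^ (Finset.image g Finset.univ).card := Finset.prod_const _
    · push_neg at hall
      obtain ⟨i, hiS, hlt⟩ := hall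
      have hone : (Finset.univ.filter fun j => g j = i).card = 1 := by
        have hpos : 0 < (Finset.univ.filter fun j => g j = i).card := by
          obtain ⟨j, _, hj⟩ := Finset.mem_image.mp hiS
          exact Finset.card_pos.mpr ⟨j, Finset.mem_filter.mpr ⟨Finset.mem_univ j, hj⟩⟩
        omega
      have hzero : ∏ i ∈ Finset.image g Finset.univ,
          ∫ ω, (Y i ω)^((Finset.univ.filter fun j => g j = i).card) ∂μ = 0 :=
        Finset.prod_eq_zero hiS (by simp only [hone, pow_one]; exact hY1 i)
      rw [hzero]
      simp
  set A := A0.filter (fun g => ∀ i ∈ Finset.image g Finset.univ,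
      2 ≤ (Finset.univ.filter fun j => g j = i).card) with hA
  have hmain1 : ∑ g ∈ A0, ∫ ω, ∏ j, Y (g j) ω ∂μ
      ≤ ∑ g ∈ A, p ^ (Finset.image g Finset.univ).card := by
    calc ∑ g ∈ A0, ∫ ω, ∏ j, Y (g j) ω ∂μ
        ≤ ∑ g ∈ A0, |∫ ω, ∏ j, Y (g j) ω ∂μ| := Finset.sum_le_sum fun g _ => le_abs_self _
      _ ≤ ∑ g ∈ A0, (if (∀ i ∈ Finset.image g Finset.univ,
            2 ≤ (Finset.univ.filter fun j => g j = i).card)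
          then p ^ (Finset.image g Finset.univ).card else 0) :=
          Finset.sum_le_sum fun g _ => hterm g
      _ = ∑ g ∈ A, p ^ (Finset.image g Finset.univ).card := (Finset.sum_filter _ _).symm
  set T := (Finset.univ : Finset (Fin n')).powerset.filter (fun S => S.card ≤ q) with hT
  have hmaps : ∀ g ∈ A, Finset.image g Finset.univ ∈ T := by
    intro g hg
    refine Finset.mem_filter.mpr ⟨Finset.mem_powerset.mpr (Finset.subset_univ _), ?_⟩
    have hcards : (2*q) = ∑ i ∈ Finset.image g Finset.univ,
        (Finset.univ.filter fun j => g j = i).card := by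
      have := Finset.card_eq_sum_card_fiberwise
        (fun j (_ : j ∈ (Finset.univ : Finset (Fin (2*q)))) =>
          Finset.mem_image_of_mem g (Finset.mem_univ j))
      simpa using this
    have h2 : 2 * (Finset.image g Finset.univ).card
        ≤ ∑ i ∈ Finset.image g Finset.univ, (Finset.univ.filter fun j => g j = i).card := by
      calc 2 * (Finset.image g Finset.univ).card
          = ∑ _i ∈ Finset.image g Finset.univ, 2 := by
            rw [Finset.sum_const, smul_eq_mul, mul_comm]
        _ ≤ _ := Finset.sum_le_sum ((Finset.mem_filter.mp hg).2)
    omega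
  have hmain2 : ∑ g ∈ A, p ^ (Finset.image g Finset.univ).card
      ≤ ∑ S ∈ T, (q:ℝ)^(2*q) * p ^ S.card := by
    rw [← Finset.sum_fiberwise_of_maps_to hmaps
      (fun g => p ^ (Finset.image g Finset.univ).card)]
    apply Finset.sum_le_sum
    intro S hS
    have hsub : A.filter (fun g => Finset.image g Finset.univ = S)
        ⊆ Fintype.piFinset (fun _ : Fin (2*q) => S) := by
      intro g hg
      rw [Fintype.mem_piFinset]
      intro j
      rw [← (Finset.mem_filter.mp hg).2]
      exact Finset.mem_image_of_mem g (Finset.mem_univ j)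
    have hcardle : (((A.filter (fun g => Finset.image g Finset.univ = S)).card : ℕ) : ℝ)
        ≤ (q:ℝ)^(2*q) := by
      have h1 : (A.filter (fun g => Finset.image g Finset.univ = S)).card
          ≤ S.card ^ (2*q) := by
        have hle := Finset.card_le_card hsub
        rwa [Fintype.card_piFinset, Finset.prod_const, Finset.card_univ, Fintype.card_fin] at hle
      have hSq : S.card ≤ q := (Finset.mem_filter.mp hS).2
      calc (((A.filter (fun g => Finset.image g Finset.univ = S)).card : ℕ) : ℝ)
          ≤ ((S.card ^ (2*q) : ℕ) : ℝ) := by exact_mod_cast h1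
        _ ≤ (q:ℝ)^(2*q) := by
            push_cast
            exact pow_le_pow_left₀ (by positivity) (by exact_mod_cast hSq) _
    calc ∑ g ∈ A.filter (fun g => Finset.image g Finset.univ = S),
          p ^ (Finset.image g Finset.univ).card
        = ∑ g ∈ A.filter (fun g => Finset.image g Finset.univ = S), p ^ S.card :=
          Finset.sum_congr rfl fun g hg => by rw [(Finset.mem_filter.mp hg).2]
      _ = (((A.filter (fun g => Finset.image g Finset.univ = S)).card : ℕ) : ℝ) * p ^ S.card := by
          rw [Finset.sum_const, nsmul_eq_mul]
      _ ≤ (q:ℝ)^(2*q) * p ^ S.card :=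
          mul_le_mul_of_nonneg_right hcardle (by positivity)
  have hmain3 : ∑ S ∈ T, p ^ S.card ≤ ((q:ℝ)+1) * ((n':ℝ) * p)^q := by
    have hsubT : T ⊆ (Finset.range (q+1)).biUnion
        (fun j => Finset.powersetCard j Finset.univ) := by
      intro S hS
      rw [Finset.mem_biUnion]
      obtain ⟨h1, h2⟩ := Finset.mem_filter.mp hS
      exact ⟨S.card, Finset.mem_range.mpr (by omega),
        Finset.mem_powersetCard.mpr ⟨Finset.mem_powerset.mp h1, rfl⟩⟩
    have hdisj : (↑(Finset.range (q+1)) : Set ℕ).PairwiseDisjoint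
        (fun j => Finset.powersetCard j (Finset.univ : Finset (Fin n'))) := by
      intro a _ b _ hab
      refine Finset.disjoint_left.mpr fun S hSa hSb => hab ?_
      rw [← (Finset.mem_powersetCard.mp hSa).2, ← (Finset.mem_powersetCard.mp hSb).2]
    calc ∑ S ∈ T, p ^ S.card
        ≤ ∑ S ∈ (Finset.range (q+1)).biUnion
            (fun j => Finset.powersetCard j Finset.univ), p ^ S.card :=
          Finset.sum_le_sum_of_subset_of_nonneg hsubT (fun S _ _ => by positivity)
      _ = ∑ j ∈ Finset.range (q+1), ∑ S ∈ Finset.powersetCard j Finset.univ, p ^ S.card :=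
          Finset.sum_biUnion hdisj
      _ ≤ ∑ _j ∈ Finset.range (q+1), ((n':ℝ) * p)^q := by
          apply Finset.sum_le_sum
          intro j hj
          calc ∑ S ∈ Finset.powersetCard j (Finset.univ : Finset (Fin n')), p ^ S.card
              = ∑ S ∈ Finset.powersetCard j (Finset.univ : Finset (Fin n')), p ^ j :=
                Finset.sum_congr rfl fun S hS => by rw [(Finset.mem_powersetCard.mp hS).2]
            _ = (((Finset.powersetCard j (Finset.univ : Finset (Fin n'))).card : ℕ) : ℝ) * p ^ j := by
                rw [Finset.sum_const, nsmul_eq_mul]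
            _ = ((n'.choose j : ℕ) : ℝ) * p ^ j := by
                rw [Finset.card_powersetCard, Finset.card_univ, Fintype.card_fin]
            _ ≤ ((n':ℝ))^j * p^j := by
                apply mul_le_mul_of_nonneg_right _ (by positivity)
                exact_mod_cast Nat.choose_le_pow n' j
            _ = ((n':ℝ) * p)^j := (mul_pow _ _ _).symm
            _ ≤ ((n':ℝ) * p)^q :=
                pow_le_pow_right₀ hEX (Nat.lt_succ_iff.mp (Finset.mem_range.mp hj))
      _ = ((q:ℝ)+1) * ((n':ℝ)*p)^q := by
          rw [Finset.sum_const, Finset.card_range, nsmul_eq_mul]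
          push_cast
          ring
  calc ∫ ω, ((n':ℝ) * p
        - ((Finset.univ.filter fun i : Fin n' => h i ω = k).card : ℝ))^(2*q) ∂μ
      = ∑ g ∈ A0, ∫ ω, ∏ j, Y (g j) ω ∂μ := hswap
    _ ≤ ∑ g ∈ A, p ^ (Finset.image g Finset.univ).card := hmain1
    _ ≤ ∑ S ∈ T, (q:ℝ)^(2*q) * p ^ S.card := hmain2
    _ = (q:ℝ)^(2*q) * ∑ S ∈ T, p ^ S.card := by rw [← Finset.mul_sum]
    _ ≤ (q:ℝ)^(2*q) * (((q:ℝ)+1) * ((n':ℝ) * p)^q) :=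
        mul_le_mul_of_nonneg_left hmain3 (by positivity)
    _ = ((q:ℝ)+1) * (q:ℝ)^(2*q) * ((n':ℝ) * p)^q := by ring

open scoped Classical in
lemma aux_bin_tail {Ω : Type} [MeasurableSpace Ω] {μ : Measure Ω} [IsProbabilityMeasure μ]
    {n' M : ℕ} (hM : 0 < M) (h : Fin n' → Ω → Fin M)
    (hmeas : ∀ i, Measurable (h i))
    (hunif : ∀ i k, μ {ω | h i ω = k} = (M : ENNReal)⁻¹)
    {c : ℕ} (hindep : CWiseIndep c h μ) (k : Fin M)
    {q : ℕ} (hq : 2 * q ≤ c) (hq1 : 1 ≤ q)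
    (B : ℕ) (hEX1 : (1:ℝ) ≤ (n':ℝ) * (M:ℝ)⁻¹)
    (hBt : (B:ℝ) < (n':ℝ) * (M:ℝ)⁻¹) :
    μ {ω | ((Finset.univ.filter fun i : Fin n' => h i ω = k).card : ℝ) ≤ (B:ℝ)}
      ≤ ENNReal.ofReal (((q:ℝ)+1) * (q:ℝ)^(2*q) * ((n':ℝ) * (M:ℝ)⁻¹)^q
          / ((n':ℝ) * (M:ℝ)⁻¹ - (B:ℝ))^(2*q)) := by
  set EX := (n':ℝ) * (M:ℝ)⁻¹ with hEX_def
  set t := EX - (B:ℝ) with ht_def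
  have ht0 : 0 < t := by rw [ht_def]; linarith
  set X : Ω → ℝ := fun ω => ((Finset.univ.filter fun i : Fin n' => h i ω = k).card : ℝ)
    with hX_def
  have hXmeas : Measurable X := by
    have hXeq : X = fun ω => ∑ i, if h i ω = k then (1:ℝ) else 0 := by
      funext ω
      rw [hX_def]
      beta_reduce
      rw [Finset.card_filter]
      push_cast
      exact Finset.sum_congr rfl fun i _ => by split_ifs <;> simp
    rw [hXeq]
    exact Finset.measurable_sum _ fun i _ =>
      Measurable.ite (hmeas i (MeasurableSet.singleton k)) measurable_const measurable_const
  have hX0 : ∀ ω, 0 ≤ X ω := fun ω => by positivity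
  have hXn : ∀ ω, X ω ≤ (n':ℝ) := by
    intro ω
    rw [hX_def]
    beta_reduce
    have := Finset.card_filter_le (Finset.univ : Finset (Fin n')) (fun i => h i ω = k)
    calc ((Finset.univ.filter fun i : Fin n' => h i ω = k).card : ℝ)
        ≤ ((Finset.univ : Finset (Fin n')).card : ℝ) := by exact_mod_cast this
      _ = (n':ℝ) := by rw [Finset.card_univ, Fintype.card_fin]
  set f : Ω → ℝ := fun ω => (EX - X ω)^(2*q) with hf_def
  have hfmeas : Measurable f := (measurable_const.sub hXmeas).pow_const _
  have hfnonneg : ∀ ω, 0 ≤ f ω := by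
    intro ω
    rw [hf_def]
    exact Even.pow_nonneg (even_two_mul q) _
  have hfint : Integrable f μ := by
    apply aux_integrable_of_bound hfmeas ((EX + (n':ℝ))^(2*q))
    intro ω
    rw [hf_def]
    beta_reduce
    rw [abs_pow]
    apply pow_le_pow_left₀ (abs_nonneg _)
    rw [abs_le]
    constructor
    · have := hXn ω; nlinarith [hX0 ω]
    · have := hX0 ω; nlinarith [hXn ω]
  have hmom := aux_moment hM h hmeas hunif hindep k hq hq1 hEX1
  have hmarkov := mul_meas_ge_le_integral_of_nonneg
    (Filter.Eventually.of_forall hfnonneg) hfint (t^(2*q))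
  have hsubset : {ω | X ω ≤ (B:ℝ)} ⊆ {ω | t^(2*q) ≤ f ω} := by
    intro ω hω
    simp only [Set.mem_setOf_eq] at hω ⊢
    rw [hf_def]
    beta_reduce
    apply pow_le_pow_left₀ ht0.le
    rw [ht_def]
    linarith
  have hne : μ {ω | t^(2*q) ≤ f ω} ≠ ⊤ := measure_ne_top μ _
  have htpos : 0 < t^(2*q) := pow_pos ht0 _
  have hToReal : (μ {ω | t^(2*q) ≤ f ω}).toReal
      ≤ (((q:ℝ)+1) * (q:ℝ)^(2*q) * EX^q) / t^(2*q) := by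
    rw [le_div_iff₀ htpos]
    calc (μ {ω | t^(2*q) ≤ f ω}).toReal * t^(2*q)
        = t^(2*q) * (μ {ω | t^(2*q) ≤ f ω}).toReal := by ring
      _ ≤ ∫ ω, f ω ∂μ := hmarkov
      _ ≤ ((q:ℝ)+1) * (q:ℝ)^(2*q) * EX^q := hmom
  calc μ {ω | X ω ≤ (B:ℝ)} ≤ μ {ω | t^(2*q) ≤ f ω} := measure_mono hsubset
    _ = ENNReal.ofReal ((μ {ω | t^(2*q) ≤ f ω}).toReal) := (ENNReal.ofReal_toReal hne).symm
    _ ≤ ENNReal.ofReal ((((q:ℝ)+1) * (q:ℝ)^(2*q) * EX^q) / t^(2*q)) :=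
        ENNReal.ofReal_le_ofReal hToReal

set_option maxHeartbeats 2000000 in
open scoped Classical in
/-- Claim 5.2: for every `δ ∈ (0, 0.1)` and every sufficiently large `c`
(depending only on `δ`), for all sufficiently large `n`: if `n′ ≤ n` keys are hashed by a
`c`-wise independent family of uniform hash values into `M` bins, with
`n^δ/2 ≤ B ≤ 2 n^δ` and `n′/M ≥ B + n^δ/(log₂ n)^{11}`, then the probability that some
bin receives at most `B` keys is at most `n^{1 - δc/3}`; i.e., with high probability in
`n`, every bin has at least `B + 1` keys hashing to it. -/
theorem stmt_11 :
    ∀ δ : ℝ, 0 < δ → δ < 0.1 →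
      ∃ c₀ : ℕ, ∀ c : ℕ, c₀ ≤ c →
        ∃ N₀ : ℕ, ∀ n : ℕ, N₀ ≤ n →
          ∀ n' : ℕ, n' ≤ n →
          ∀ M B : ℕ, 0 < M → 0 < B →
            (n : ℝ) ^ δ / 2 ≤ (B : ℝ) → (B : ℝ) ≤ 2 * (n : ℝ) ^ δ →
            (B : ℝ) + (n : ℝ) ^ δ / (Real.logb 2 n) ^ 11 ≤ (n' : ℝ) / (M : ℝ) →
            ∀ (Ω : Type) (_ : MeasurableSpace Ω) (μ : Measure Ω),
              IsProbabilityMeasure μ →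
            ∀ h : Fin n' → Ω → Fin M,
              (∀ i, Measurable (h i)) →
              (∀ i k, μ {ω | h i ω = k} = (M : ENNReal)⁻¹) →
              CWiseIndep c h μ →
              μ {ω | ∃ k : Fin M,
                  ((Finset.univ.filter fun i : Fin n' => h i ω = k).card : ℝ) ≤ (B : ℝ)} ≤
                ENNReal.ofReal ((n : ℝ) ^ (1 - δ * c / 3)) := by
  intro δ hδ0 hδ1
  refine ⟨6, fun c hc6 => ?_⟩
  set q := c / 2 with hq_def
  have hqfacts : 2 * q ≤ c ∧ c ≤ 2 * q + 1 ∧ 1 ≤ q := by omega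
  obtain ⟨hq2c, hc2q, hq1⟩ := hqfacts
  set K : ℝ := ((q:ℝ)+1) * (q:ℝ)^(2*q) * 4^q with hK_def
  have hq0R : (0:ℝ) < (q:ℝ) := by exact_mod_cast hq1
  have hK0 : 0 < K := by positivity
  have hcR : (6:ℝ) ≤ (c:ℝ) := by exact_mod_cast hc6
  have hc0R : (0:ℝ) < (c:ℝ) := by linarith
  have he0 : 0 < δ * c / 12 := by
    apply div_pos (mul_pos hδ0 hc0R) (by norm_num)
  -- eventual bound
  have hlo := isLittleO_log_rpow_rpow_atTop ((22*q : ℕ):ℝ) he0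
  have hev1 := hlo.def (c := (Real.log 2)^(22*q) / K) (by positivity)
  have hev2 : ∀ᶠ x : ℝ in Filter.atTop,
      K * (Real.logb 2 x)^(22*q) ≤ x ^ (δ*c/12) := by
    filter_upwards [hev1, Filter.eventually_ge_atTop (2:ℝ)] with x hx h2x
    have hxp : (0:ℝ) < x := by linarith
    have hlogx : 0 ≤ Real.log x := Real.log_nonneg (by linarith)
    have hl2 : 0 < Real.log 2 := Real.log_pos one_lt_two
    rw [Real.norm_eq_abs, Real.norm_eq_abs, Real.rpow_natCast,
      abs_of_nonneg (by positivity), abs_of_nonneg (Real.rpow_nonneg hxp.le _)] at hx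
    rw [Real.logb, div_pow]
    calc K * ((Real.log x)^(22*q) / (Real.log 2)^(22*q))
        ≤ K * ((((Real.log 2)^(22*q) / K) * x^(δ*c/12)) / (Real.log 2)^(22*q)) := by
          apply mul_le_mul_of_nonneg_left _ hK0.le
          exact (div_le_div_iff_of_pos_right (by positivity)).mpr hx
      _ = x^(δ*c/12) := by field_simp
  have hev : ∀ᶠ m : ℕ in Filter.atTop,
      2 ≤ m ∧ K * (Real.logb 2 (m:ℝ))^(22*q) ≤ (m:ℝ) ^ (δ*c/12) :=
    (Filter.eventually_ge_atTop 2).and (tendsto_natCast_atTop_atTop.eventually hev2)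
  obtain ⟨N₀, hN₀⟩ := Filter.eventually_atTop.mp hev
  refine ⟨N₀, fun n hn => ?_⟩
  obtain ⟨hn2, hbig⟩ := hN₀ n hn
  intro n' hn'n M B hM hB hBl hBu hMB Ω mΩ μ hprob h hmeas hunif hindep
  set L := Real.logb 2 (n:ℝ) with hL_def
  have hnR : (2:ℝ) ≤ (n:ℝ) := by exact_mod_cast hn2
  have hn0 : (0:ℝ) < (n:ℝ) := by linarith
  have hL1 : (1:ℝ) ≤ L := by
    have h1 : Real.log 2 ≤ Real.log n := Real.log_le_log (by norm_num) hnR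
    have h2 : 0 < Real.log 2 := Real.log_pos one_lt_two
    rw [hL_def, Real.logb, le_div_iff₀ h2]
    linarith
  have hL0 : (0:ℝ) < L := by linarith
  set u := (n:ℝ) ^ δ with hu_def
  have hu0 : 0 < u := Real.rpow_pos_of_pos hn0 δ
  set p := (M:ℝ)⁻¹ with hp_def
  set EX := (n':ℝ) * p with hEX_def
  have hMR : (0:ℝ) < (M:ℝ) := by exact_mod_cast hM
  have hdiv : (n':ℝ) / (M:ℝ) = EX := by rw [hEX_def, hp_def, div_eq_mul_inv]
  rw [hdiv] at hMB
  have hB1 : (1:ℝ) ≤ (B:ℝ) := by exact_mod_cast hB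
  have htlow : u / L^11 ≤ EX - (B:ℝ) := by linarith
  have htposlow : 0 < u / L^11 := by positivity
  have hBt : (B:ℝ) < EX := by linarith
  have hEX1 : (1:ℝ) ≤ EX := by linarith
  have hMn' : (M:ℝ) ≤ (n':ℝ) := by
    have h1 : (1:ℝ) ≤ (n':ℝ)/(M:ℝ) := by rw [hdiv]; exact hEX1
    calc (M:ℝ) = 1 * M := (one_mul _).symm
      _ ≤ ((n':ℝ)/(M:ℝ)) * M := by apply mul_le_mul_of_nonneg_right h1 hMR.le
      _ = (n':ℝ) := by field_simp
  have hn'nR : (n':ℝ) ≤ (n:ℝ) := by exact_mod_cast hn'n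
  set t := EX - (B:ℝ) with ht_def
  have ht0 : 0 < t := by rw [ht_def]; linarith
  set D := ((q:ℝ)+1) * (q:ℝ)^(2*q) * EX^q / t^(2*q) with hD_def
  have hD0 : 0 ≤ D := by
    rw [hD_def]
    apply div_nonneg (by positivity) (by positivity)
  -- bound on EX / t^2
  have hstep1 : EX / t^2 ≤ 4 * L^22 / u := by
    have hLpow : (u / L^11)^2 = u^2 / L^22 := by
      rw [div_pow, ← pow_mul]
    rcases le_or_gt EX (2*(B:ℝ)) with hcase | hcase
    · have hEX4u : EX ≤ 4 * u := by linarith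
      have ht2 : u^2/L^22 ≤ t^2 := by
        rw [← hLpow]
        exact pow_le_pow_left₀ htposlow.le htlow 2
      calc EX / t^2 ≤ (4*u) / (u^2/L^22) :=
            div_le_div₀ (by positivity) hEX4u (by positivity) ht2
        _ = 4 * L^22 / u := by field_simp
    · have hEX2t : EX ≤ 2*t := by rw [ht_def]; linarith
      have h2t : EX / t^2 ≤ 2 / t := by
        have ha : EX / t^2 ≤ (2*t) / t^2 := (div_le_div_iff_of_pos_right (by positivity)).mpr hEX2t
        have hb : (2*t)/t^2 = 2/t := by
          field_simp
        linarith
      have hu_le : u ≤ t * L^11 := by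
        rw [div_le_iff₀ (by positivity)] at htlow
        linarith [htlow]
      have h2u : 2 / t ≤ 2 * L^11 / u := by
        rw [div_le_div_iff₀ ht0 hu0]
        linarith [hu_le]
      have h4 : 2 * L^11 / u ≤ 4 * L^22 / u := by
        apply (div_le_div_iff_of_pos_right hu0).mpr
        have h11 : L^11 ≤ L^22 := pow_le_pow_right₀ hL1 (by norm_num)
        have h22 : 0 ≤ L^22 := by positivity
        linarith
      linarith
  -- step 2
  have hD2 : D ≤ (((q:ℝ)+1) * (q:ℝ)^(2*q)) * (4*L^22/u)^q := by
    have hsplit : EX^q / t^(2*q) = (EX/t^2)^q := by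
      rw [div_pow, pow_mul]
    rw [hD_def, mul_div_assoc, hsplit]
    apply mul_le_mul_of_nonneg_left _ (by positivity)
    exact pow_le_pow_left₀ (by positivity) hstep1 q
  have huq : u^q = (n:ℝ) ^ (δ * (q:ℝ)) := by
    rw [hu_def, ← Real.rpow_natCast ((n:ℝ)^δ) q, ← Real.rpow_mul hn0.le]
  have hexp : δ*(c:ℝ)/12 + (1 - δ*(q:ℝ)) ≤ 1 - δ * c / 3 := by
    have hcast : ((c:ℝ)) ≤ 2*(q:ℝ)+1 := by exact_mod_cast hc2q
    have h5 : 5*(c:ℝ)/12 ≤ (q:ℝ) := by linarith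
    linarith [mul_le_mul_of_nonneg_left h5 hδ0.le]
  have hfinal : (M:ℝ) * D ≤ (n:ℝ) ^ (1 - δ * c / 3) := by
    have h2 : (4*L^22/u)^q = 4^q * L^(22*q) / u^q := by
      rw [div_pow, mul_pow, ← pow_mul]
    calc (M:ℝ) * D
        ≤ (n:ℝ) * ((((q:ℝ)+1) * (q:ℝ)^(2*q)) * (4*L^22/u)^q) :=
          mul_le_mul (hMn'.trans hn'nR) hD2 hD0 hn0.le
      _ = (K * L^(22*q)) * ((n:ℝ) / u^q) := by
          rw [h2, hK_def]; ring
      _ ≤ (n:ℝ)^(δ*(c:ℝ)/12) * ((n:ℝ) / u^q) := by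
          apply mul_le_mul_of_nonneg_right hbig
          positivity
      _ = (n:ℝ)^(δ*(c:ℝ)/12) * (n:ℝ)^(1 - δ*(q:ℝ)) := by
          rw [huq, Real.rpow_sub hn0, Real.rpow_one]
      _ = (n:ℝ)^(δ*(c:ℝ)/12 + (1 - δ*(q:ℝ))) := (Real.rpow_add hn0 _ _).symm
      _ ≤ (n:ℝ)^(1 - δ * c / 3) :=
          Real.rpow_le_rpow_of_exponent_le (by linarith) hexp
  -- union bound and conclusion
  have hset : {ω | ∃ k : Fin M,
        ((Finset.univ.filter fun i : Fin n' => h i ω = k).card : ℝ) ≤ (B:ℝ)}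
      = ⋃ k : Fin M, {ω | ((Finset.univ.filter fun i : Fin n' => h i ω = k).card : ℝ) ≤ (B:ℝ)} := by
    ext ω; simp [Set.mem_iUnion]
  have hbin : ∀ k : Fin M,
      μ {ω | ((Finset.univ.filter fun i : Fin n' => h i ω = k).card : ℝ) ≤ (B:ℝ)}
        ≤ ENNReal.ofReal D :=
    fun k => aux_bin_tail hM h hmeas hunif hindep k hq2c hq1 B hEX1 hBt
  calc μ {ω | ∃ k : Fin M,
        ((Finset.univ.filter fun i : Fin n' => h i ω = k).card : ℝ) ≤ (B:ℝ)}
      = μ (⋃ k : Fin M, {ω |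
          ((Finset.univ.filter fun i : Fin n' => h i ω = k).card : ℝ) ≤ (B:ℝ)}) := by rw [hset]
    _ ≤ ∑' k : Fin M, μ {ω |
          ((Finset.univ.filter fun i : Fin n' => h i ω = k).card : ℝ) ≤ (B:ℝ)} :=
        measure_iUnion_le _
    _ = ∑ k : Fin M, μ {ω |
          ((Finset.univ.filter fun i : Fin n' => h i ω = k).card : ℝ) ≤ (B:ℝ)} :=
        tsum_fintype _
    _ ≤ ∑ _k : Fin M, ENNReal.ofReal D := Finset.sum_le_sum fun k _ => hbin k
    _ = (M : ℕ) • ENNReal.ofReal D := by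
        rw [Finset.sum_const, Finset.card_univ, Fintype.card_fin]
    _ = ENNReal.ofReal ((M:ℝ) * D) := by
        rw [nsmul_eq_mul,
          show ((M:ℕ) : ENNReal) = ENNReal.ofReal ((M:ℕ):ℝ) from (ENNReal.ofReal_natCast M).symm,
          ← ENNReal.ofReal_mul (by positivity)]
    _ ≤ ENNReal.ofReal ((n:ℝ) ^ (1 - δ * c / 3)) := ENNReal.ofReal_le_ofReal hfinal
end
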